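/- arXiv:1601.08002 — 6 statements merged into one kernel-verified Lean document; each statement's English description precedes it below -/
import Mathlib

section
/- Fix an integer k > k* (used as the threshold index for all n with n > k) and fix an index j ∉ K*. Then for every ε > 0, lim_{n→∞} P[ α̂_j < 2 − ε ] = 0. -/
set_option autoImplicit false
set_option maxHeartbeats 1000000

open MeasureTheory ProbabilityTheory Filter Real

lemma gauss_Ioo_lt_one (s : ℝ) : gaussianReal 0 1 (Set.Ioo (-s) s) < 1 := by
  have hpos : 0 < gaussianReal 0 1 (Set.Ici s) := by
    rw [gaussianReal_apply 0 one_ne_zero]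
    rw [lintegral_pos_iff_support (measurable_gaussianPDF 0 1)]
    have hsupp : Function.support (gaussianPDF 0 1) = Set.univ := by
      ext x; simp [Function.mem_support, (gaussianPDF_pos 0 one_ne_zero x).ne']
    rw [Measure.restrict_apply' measurableSet_Ici, hsupp, Set.univ_inter,
      Real.volume_Ici]
    simp
  have hdisj : Disjoint (Set.Ioo (-s) s) (Set.Ici s) := by
    rw [Set.disjoint_left]
    intro x hx hx'
    exact absurd hx.2 (not_lt.2 hx')
  have hle : gaussianReal 0 1 (Set.Ioo (-s) s) + gaussianReal 0 1 (Set.Ici s) ≤ 1 := by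
    rw [← measure_union hdisj measurableSet_Ici]
    exact prob_le_one
  calc gaussianReal 0 1 (Set.Ioo (-s) s)
      < gaussianReal 0 1 (Set.Ioo (-s) s) + gaussianReal 0 1 (Set.Ici s) :=
        ENNReal.lt_add_right (measure_ne_top _ _) hpos.ne'
    _ ≤ 1 := hle

lemma gauss_tail_tendsto :
    Tendsto (fun T : ℕ => gaussianReal 0 1 {x : ℝ | (T : ℝ) < |x|}) atTop (nhds 0) := by
  have hmeas : ∀ T : ℕ, NullMeasurableSet {x : ℝ | (T : ℝ) < |x|} (gaussianReal 0 1) :=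
    fun T => (measurableSet_lt measurable_const measurable_abs).nullMeasurableSet
  have hanti : Antitone (fun T : ℕ => {x : ℝ | (T : ℝ) < |x|}) := by
    intro T T' hTT'
    refine Set.setOf_subset_setOf.mpr fun x hx => ?_
    exact lt_of_le_of_lt (Nat.cast_le.mpr hTT') hx
  have h := tendsto_measure_iInter_atTop (μ := gaussianReal 0 1)
    (s := fun T : ℕ => {x : ℝ | (T : ℝ) < |x|}) hmeas hanti ⟨0, measure_ne_top _ _⟩
  have hempty : ⋂ T : ℕ, {x : ℝ | (T : ℝ) < |x|} = ∅ := by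
    ext x
    simp only [Set.mem_iInter, Set.mem_setOf_eq, Set.mem_empty_iff_false, iff_false, not_forall,
      not_lt]
    obtain ⟨T, hT⟩ := exists_nat_gt |x|
    exact ⟨T, hT.le⟩
  rw [hempty, measure_empty] at h
  exact h

/-- The adaptive scaling factor of a non-true component eventually exceeds `2`.  Fix a
threshold index `k > k*` and an index `j ∉ K*` (with `j ≥ 1`).  With `θ̃_k = |c̃_{p_{k+1}}|`
and the adaptive scaling value `α̂_j = 1 + θ̃_k/|c̃_j|` (`= α` if `c̃_j = 0`), one has
`P[α̂_j < 2 − ε] → 0` as `n → ∞`, for every `ε > 0`. -/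
theorem adaptive_scaling_nontrue_component_ge_two
    {Ω : Type*} [MeasureSpace Ω] [IsProbabilityMeasure (ℙ : Measure Ω)]
    (σ : ℝ) (hσ : 0 < σ)
    (Kstar : Finset ℕ) (hKne : Kstar.Nonempty) (hKpos : ∀ j ∈ Kstar, 1 ≤ j)
    (β : ℕ → ℝ) (hβ : ∀ j, β j ≠ 0 ↔ j ∈ Kstar)
    (c : ℕ → ℕ → Ω → ℝ) (hmeas : ∀ n j, Measurable (c n j))
    (hdist : ∀ n, Kstar.max' hKne < n → ∀ j ∈ Finset.Icc 1 n,
      Measure.map (c n j) ℙ = gaussianReal (Real.sqrt n * β j / σ) 1)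
    (hindep : ∀ n, Kstar.max' hKne < n →
      iIndepFun
        (fun j : (Finset.Icc 1 n : Finset ℕ) => c n (j : ℕ)) ℙ)
    (p : ℕ → Ω → ℕ → ℕ) (hpmeas : ∀ n l, Measurable fun ω => p n ω l)
    (hp : ∀ n, Kstar.max' hKne < n → ∀ᵐ ω ∂ℙ,
      Set.BijOn (p n ω) (Set.Icc 1 n) (Set.Icc 1 n) ∧
      ∀ l ∈ Set.Icc 1 n, ∀ r ∈ Set.Icc 1 n, l < r →
        |c n (p n ω r) ω| < |c n (p n ω l) ω|)
    (α : ℝ) (k : ℕ) (hk : Kstar.card < k)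
    (j : ℕ) (hj1 : 1 ≤ j) (hj : j ∉ Kstar)
    (a : ℕ → Ω → ℝ)
    (ha : ∀ n ω, a n ω =
      if c n j ω = 0 then α else 1 + |c n (p n ω (k + 1)) ω| / |c n j ω|)
    (ε : ℝ) (hε : 0 < ε) :
    Tendsto (fun n : ℕ => (ℙ {ω | a n ω < 2 - ε}).toReal) atTop (nhds 0) := by
  classical
  -- reduce to ε < 1
  set ε' : ℝ := min ε (1/2) with hε'def
  have hε'pos : 0 < ε' := lt_min hε (by norm_num)
  have hε'lt1 : ε' < 1 := lt_of_le_of_lt (min_le_right _ _) (by norm_num)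
  have hε'le : ε' ≤ ε := min_le_left _ _
  refine squeeze_zero (g := fun n => (ℙ {ω | a n ω < 2 - ε'}).toReal)
    (fun n => ENNReal.toReal_nonneg) (fun n => ?_) ?_
  · refine ENNReal.toReal_mono (measure_ne_top _ _) (measure_mono ?_)
    intro ω hω
    rw [Set.mem_setOf_eq] at hω ⊢
    linarith
  set m := Kstar.max' hKne with hmdef
  set B := max m (max j (k+1)) with hBdef
  have hmB : m ≤ B := le_max_left _ _
  have hjB : j ≤ B := le_max_of_le_right (le_max_left _ _)
  have hkB : k + 1 ≤ B := le_max_of_le_right (le_max_right _ _)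
  have hβ0 : ∀ i, m < i → β i = 0 := by
    intro i hi
    by_contra h
    exact absurd (Kstar.le_max' i ((hβ i).1 h)) (not_le.2 hi)
  have hβj : β j = 0 := by
    by_contra h
    exact hj ((hβ j).1 h)
  rw [tendsto_order]
  constructor
  · intro x hx
    filter_upwards with n
    exact lt_of_lt_of_le hx ENNReal.toReal_nonneg
  intro η hη
  have hhalf : (0:ENNReal) < ENNReal.ofReal η / 2 :=
    ENNReal.div_pos (by simpa [ENNReal.ofReal_pos] using hη) (by norm_num)
  obtain ⟨T, hT⟩ : ∃ T : ℕ, gaussianReal 0 1 {x : ℝ | (T:ℝ) < |x|} < ENNReal.ofReal η / 2 :=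
    (gauss_tail_tendsto.eventually_lt_const hhalf).exists
  set s : ℝ := (1 - ε') * (T:ℝ) with hsdef
  set r := gaussianReal 0 1 (Set.Ioo (-s) s) with hrdef
  have hr1 : r < 1 := gauss_Ioo_lt_one s
  set g : ℕ → ℕ := fun n => (n - B) / (k+1) with hgdef
  have hgtop : Tendsto g atTop atTop := by
    rw [tendsto_atTop_atTop]
    intro N
    refine ⟨B + N*(k+1), fun n hn => ?_⟩
    exact (Nat.le_div_iff_mul_le (by omega : 0 < k+1)).2 (by omega)
  have hpow : Tendsto (fun n => ((k:ENNReal)+1) * r ^ (g n)) atTop (nhds 0) := by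
    have h0 : Tendsto (fun n => r ^ (g n)) atTop (nhds 0) :=
      (ENNReal.tendsto_pow_atTop_nhds_zero_of_lt_one hr1).comp hgtop
    have h1 := ENNReal.Tendsto.const_mul h0 (Or.inr (by simp : ((k:ENNReal)+1) ≠ ⊤))
    simpa using h1
  have hev2 : ∀ᶠ n in atTop, ((k:ENNReal)+1) * r ^ (g n) < ENNReal.ofReal η / 2 :=
    hpow.eventually_lt_const hhalf
  filter_upwards [hev2, eventually_ge_atTop (B+1)] with n hn2 hnB
  have hBn : B < n := by omega
  have hmn : m < n := lt_of_le_of_lt hmB hBn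
  have hjmem : j ∈ Finset.Icc 1 n := Finset.mem_Icc.2 ⟨hj1, by omega⟩
  -- blocks
  set blk : ℕ → Finset ℕ := fun t => Finset.Ioc (B + t * g n) (B + (t+1) * g n) with hblkdef
  have hblk_sub : ∀ t, t < k+1 → ∀ i ∈ blk t, i ∈ Finset.Icc 1 n ∧ B < i := by
    intro t ht i hi
    rw [hblkdef, Finset.mem_Ioc] at hi
    have h1 : (t+1) * g n ≤ (k+1) * g n := Nat.mul_le_mul_right _ (by omega)
    have h2 : (k+1) * g n ≤ n - B := by
      rw [hgdef, mul_comm]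
      exact Nat.div_mul_le_self _ _
    refine ⟨Finset.mem_Icc.2 ⟨by omega, by omega⟩, by omega⟩
  -- the events
  set Z : Set Ω := (c n j)⁻¹' {0} with hZdef
  set Tl : Set Ω := (c n j)⁻¹' {x : ℝ | (T:ℝ) < |x|} with hTldef
  set V : ℕ → Set Ω := fun t => ⋂ i ∈ blk t, (c n i)⁻¹' (Set.Ioo (-s) s) with hVdef
  set Bad : Set Ω := {ω | ¬ (Set.BijOn (p n ω) (Set.Icc 1 n) (Set.Icc 1 n) ∧
      ∀ l ∈ Set.Icc 1 n, ∀ r ∈ Set.Icc 1 n, l < r →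
        |c n (p n ω r) ω| < |c n (p n ω l) ω|)} with hBaddef
  have hBad0 : ℙ Bad = 0 := ae_iff.mp (hp n hmn)
  have hZ0 : ℙ Z = 0 := by
    rw [hZdef, ← Measure.map_apply (hmeas n j) (measurableSet_singleton 0), hdist n hmn j hjmem]
    exact gaussianReal_absolutelyContinuous _ one_ne_zero (measure_singleton 0)
  have hTl_lt : ℙ Tl < ENNReal.ofReal η / 2 := by
    rw [hTldef, ← Measure.map_apply (hmeas n j)
      (measurableSet_lt measurable_const measurable_abs), hdist n hmn j hjmem,
      hβj, mul_zero, zero_div]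
    exact hT
  have hV_eq : ∀ t ∈ Finset.range (k+1), ℙ (V t) = r ^ g n := by
    intro t ht
    rw [Finset.mem_range] at ht
    have hsub : ∀ i ∈ blk t, i ∈ Finset.Icc 1 n := fun i hi => (hblk_sub t ht i hi).1
    set S : Finset (Finset.Icc 1 n : Finset ℕ) :=
      (blk t).attach.map ⟨fun i => ⟨i.1, hsub i.1 i.2⟩,
        fun a b hab => Subtype.ext (by simpa using congrArg Subtype.val hab)⟩ with hSdef
    have hmemS : ∀ x : (Finset.Icc 1 n : Finset ℕ), x ∈ S ↔ (x:ℕ) ∈ blk t := by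
      intro x
      simp only [hSdef, Finset.mem_map, Finset.mem_attach, true_and,
        Function.Embedding.coeFn_mk]
      constructor
      · rintro ⟨a, rfl⟩; exact a.2
      · intro hx; exact ⟨⟨x, hx⟩, Subtype.ext rfl⟩
    have hcardS : S.card = g n := by
      rw [hSdef, Finset.card_map, Finset.card_attach, hblkdef]
      have : (t+1) * g n = t * g n + g n := by ring
      simp only [Nat.card_Ioc]
      omega
    have hind := (hindep n hmn).measure_inter_preimage_eq_mul S
      (sets := fun _ => Set.Ioo (-s) s) (fun i _ => measurableSet_Ioo)
    have hset : (⋂ i ∈ S, (c n (i:ℕ)) ⁻¹' Set.Ioo (-s) s) = V t := by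
      rw [hVdef]
      ext ω
      simp only [Set.mem_iInter, Set.mem_preimage]
      constructor
      · intro h i hi
        exact h ⟨i, hsub i hi⟩ ((hmemS _).2 hi)
      · intro h x hx
        exact h x ((hmemS x).1 hx)
    rw [← hset, hind]
    have hfac : ∀ i ∈ S, ℙ ((c n (i:ℕ))⁻¹' Set.Ioo (-s) s) = r := by
      intro i hiS
      have hBi : B < (i:ℕ) := (hblk_sub t ht i ((hmemS i).1 hiS)).2
      rw [← Measure.map_apply (hmeas n i) measurableSet_Ioo, hdist n hmn i i.2,
        hβ0 i (lt_of_le_of_lt hmB hBi), mul_zero, zero_div]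
    rw [Finset.prod_congr rfl hfac, Finset.prod_const, hcardS]
  -- inclusion
  have hincl : {ω | a n ω < 2 - ε'} ⊆
      Bad ∪ (Z ∪ (Tl ∪ ⋃ t ∈ Finset.range (k+1), V t)) := by
    intro ω hω
    by_contra hnot
    simp only [Set.mem_union, not_or] at hnot
    obtain ⟨hQ', hZ', hT', hU'⟩ := hnot
    have hQω := not_not.1 hQ'
    rw [Set.mem_setOf_eq] at hω
    have hcnz : c n j ω ≠ 0 := fun h => hZ' h
    have hcle : |c n j ω| ≤ (T:ℝ) := not_lt.1 hT'
    rw [ha n ω, if_neg hcnz] at hω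
    have habs : 0 < |c n j ω| := abs_pos.2 hcnz
    have hθs : |c n (p n ω (k+1)) ω| < s := by
      have h1 : |c n (p n ω (k+1)) ω| / |c n j ω| < 1 - ε' := by linarith
      have h2 : |c n (p n ω (k+1)) ω| < (1 - ε') * |c n j ω| := by
        rwa [div_lt_iff₀ habs] at h1
      refine lt_of_lt_of_le h2 ?_
      rw [hsdef]
      exact mul_le_mul_of_nonneg_left hcle (by linarith)
    have hch : ∀ t, t < k+1 → ∃ i ∈ blk t, s ≤ |c n i ω| := by
      intro t ht
      have hnm : ω ∉ V t := fun hmem => hU' (Set.mem_biUnion (Finset.mem_range.2 ht) hmem)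
      rw [hVdef] at hnm
      simp only [Set.mem_iInter, Set.mem_preimage, not_forall] at hnm
      obtain ⟨i, hi, hno⟩ := hnm
      refine ⟨i, hi, ?_⟩
      rw [Set.mem_Ioo, not_and_or, not_lt, not_lt] at hno
      rcases hno with h | h
      · exact le_abs.2 (Or.inr (by linarith))
      · exact le_trans h (le_abs_self _)
    have hch' : ∀ t : ℕ, ∃ i, t < k+1 → i ∈ blk t ∧ s ≤ |c n i ω| := by
      intro t
      by_cases h : t < k+1
      · obtain ⟨i, hi1, hi2⟩ := hch t h
        exact ⟨i, fun _ => ⟨hi1, hi2⟩⟩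
      · exact ⟨0, fun h' => absurd h' h⟩
    choose f hf using hch'
    set Sset : Finset ℕ := (Finset.Icc 1 n).filter (fun i => s ≤ |c n i ω|) with hSsetdef
    have hcard_le : Sset.card ≤ k := by
      have hsub2 : Sset ⊆ (Finset.Icc 1 k).image (p n ω) := by
        intro i hi
        rw [hSsetdef, Finset.mem_filter, Finset.mem_Icc] at hi
        obtain ⟨⟨hi1, hin⟩, his⟩ := hi
        obtain ⟨l, hl, hpl⟩ := hQω.1.surjOn (Set.mem_Icc.2 ⟨hi1, hin⟩)
        have hlk : l ≤ k := by
          by_contra hlk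
          push_neg at hlk
          have hk1mem : (k+1) ∈ Set.Icc 1 n := Set.mem_Icc.2 ⟨by omega, by omega⟩
          have hθge : |c n (p n ω l) ω| ≤ |c n (p n ω (k+1)) ω| := by
            rcases eq_or_lt_of_le (show k+1 ≤ l by omega) with he | hlt
            · rw [← he]
            · exact (hQω.2 (k+1) hk1mem l hl hlt).le
          rw [hpl] at hθge
          linarith
        exact Finset.mem_image.2 ⟨l, Finset.mem_Icc.2 ⟨hl.1, hlk⟩, hpl⟩
      calc Sset.card ≤ _ := Finset.card_le_card hsub2
        _ ≤ (Finset.Icc 1 k).card := Finset.card_image_le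
        _ = k := by simp [Nat.card_Icc]
    have hcard_ge : k+1 ≤ Sset.card := by
      have hmaps : ∀ t ∈ Finset.range (k+1), f t ∈ Sset := by
        intro t ht
        rw [Finset.mem_range] at ht
        obtain ⟨hb, hs'⟩ := hf t ht
        simp only [hSsetdef, Finset.mem_filter]
        exact ⟨(hblk_sub t ht (f t) hb).1, hs'⟩
      have key : ∀ u v, u < v → v < k+1 → f u ≠ f v := by
        intro u v huv hv
        have hu1 : f u ∈ blk u := (hf u (by omega)).1
        have hv1 : f v ∈ blk v := (hf v hv).1
        simp only [hblkdef, Finset.mem_Ioc] at hu1 hv1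
        have : (u+1) * g n ≤ v * g n := Nat.mul_le_mul_right _ (by omega)
        intro heq
        omega
      have hinj : Set.InjOn f (Finset.range (k+1)) := by
        intro t1 ht1 t2 ht2 hfeq
        rw [Finset.coe_range, Set.mem_Iio] at ht1 ht2
        by_contra hne
        rcases lt_trichotomy t1 t2 with h | h | h
        · exact key t1 t2 h ht2 hfeq
        · exact hne h
        · exact key t2 t1 h ht1 hfeq.symm
      have := Finset.card_le_card_of_injOn f hmaps hinj
      simpa using this
    omega
  -- combine
  have hU_le : ℙ (⋃ t ∈ Finset.range (k+1), V t) ≤ ((k:ENNReal)+1) * r ^ g n := by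
    refine le_trans (measure_biUnion_finset_le _ _) ?_
    rw [Finset.sum_congr rfl hV_eq, Finset.sum_const, Finset.card_range, nsmul_eq_mul]
    push_cast
    exact le_refl _
  have hfinal : ℙ {ω | a n ω < 2 - ε'} < ENNReal.ofReal η := by
    calc ℙ {ω | a n ω < 2 - ε'}
        ≤ ℙ Bad + ℙ (Z ∪ (Tl ∪ ⋃ t ∈ Finset.range (k+1), V t)) :=
          (measure_mono hincl).trans (measure_union_le _ _)
      _ ≤ ℙ Bad + (ℙ Z + ℙ (Tl ∪ ⋃ t ∈ Finset.range (k+1), V t)) := by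
          gcongr
          exact measure_union_le _ _
      _ ≤ ℙ Bad + (ℙ Z + (ℙ Tl + ℙ (⋃ t ∈ Finset.range (k+1), V t))) := by
          gcongr
          exact measure_union_le _ _
      _ = ℙ Tl + ℙ (⋃ t ∈ Finset.range (k+1), V t) := by rw [hBad0, hZ0]; simp
      _ ≤ ℙ Tl + ((k:ENNReal)+1) * r ^ g n := by gcongr
      _ < ENNReal.ofReal η / 2 + ENNReal.ofReal η / 2 := ENNReal.add_lt_add hTl_lt hn2
      _ = ENNReal.ofReal η := ENNReal.add_halves _
  exact ENNReal.toReal_lt_of_lt_ofReal hfinal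
end

section
/- Let X₁, X₂, … be i.i.d. χ²₁ random variables, let X_{(1)}(n) = max_{1 ≤ i ≤ n} X_i, and let t_n = 2 log n − log log n − log π. Then for every x ∈ ℝ, lim_{n→∞} P[ (X_{(1)}(n) − t_n)/2 ≤ x ] = exp(−e^{−x}), i.e. the normalized maximum converges in distribution to the standard Gumbel (double exponential) distribution. -/
set_option autoImplicit false

open MeasureTheory ProbabilityTheory Filter Real

/-- The chi-squared distribution with one degree of freedom: the law of `Z^2`
for `Z` a standard normal random variable. -/

noncomputable def Gt (b : ℝ) : ℝ := ∫ z in Set.Ioi b, Real.exp (-z^2/2)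

lemma expsq_tendsto : Tendsto (fun z : ℝ => Real.exp (-z^2/2)) atTop (nhds 0) := by
  rw [Real.tendsto_exp_comp_nhds_zero]
  have : Tendsto (fun z : ℝ => z^2/2) atTop atTop :=
    (tendsto_pow_atTop (by norm_num)).atTop_div_const (by norm_num)
  simpa [neg_div] using tendsto_neg_atBot_iff.mpr this

lemma expsq_integrableOn (b : ℝ) : IntegrableOn (fun z : ℝ => Real.exp (-z^2/2)) (Set.Ioi b) := by
  have := integrable_exp_neg_mul_sq (b := 1/2) (by norm_num)
  have h2 : (fun z : ℝ => Real.exp (-z^2/2)) = fun z : ℝ => Real.exp (-(1/2) * z^2) := by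
    ext z; ring_nf
  rw [h2]
  exact this.integrableOn

lemma hasDeriv1 (z : ℝ) : HasDerivAt (fun z : ℝ => -Real.exp (-z^2/2)) (z * Real.exp (-z^2/2)) z := by
  have h : HasDerivAt (fun z : ℝ => -z^2/2) (-z) z := by
    have := ((hasDerivAt_pow 2 z).neg).div_const 2
    simpa using this.congr_deriv (by ring)
  have := (h.exp).neg
  exact this.congr_deriv (by ring)

lemma integral_zexp {b : ℝ} (hb : 0 < b) :
    ∫ z in Set.Ioi b, z * Real.exp (-z^2/2) = Real.exp (-b^2/2) := by
  have h := integral_Ioi_of_hasDerivAt_of_nonneg' (g := fun z : ℝ => -Real.exp (-z^2/2))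
    (g' := fun z => z * Real.exp (-z^2/2)) (a := b) (l := 0)
    (fun z _ => hasDeriv1 z)
    (fun z hz => mul_nonneg (le_of_lt (hb.trans hz)) (Real.exp_pos _).le)
    (by simpa using expsq_tendsto.neg)
  simpa using h

lemma integrableOn_zexp {b : ℝ} (hb : 0 < b) :
    IntegrableOn (fun z : ℝ => z * Real.exp (-z^2/2)) (Set.Ioi b) :=
  integrableOn_Ioi_deriv_of_nonneg' (g := fun z : ℝ => -Real.exp (-z^2/2))
    (fun z _ => hasDeriv1 z)
    (fun z hz => mul_nonneg (le_of_lt (hb.trans hz)) (Real.exp_pos _).le)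
    (by simpa using expsq_tendsto.neg)

lemma Gt_le {b : ℝ} (hb : 0 < b) : Gt b ≤ Real.exp (-b^2/2) / b := by
  have h1 : Gt b ≤ ∫ z in Set.Ioi b, b⁻¹ * (z * Real.exp (-z^2/2)) := by
    apply setIntegral_mono_on (expsq_integrableOn b) ((integrableOn_zexp hb).const_mul _)
      measurableSet_Ioi
    intro z hz
    have hz' : b ≤ z := le_of_lt hz
    have : 1 * Real.exp (-z^2/2) ≤ (b⁻¹ * z) * Real.exp (-z^2/2) := by
      apply mul_le_mul_of_nonneg_right _ (Real.exp_pos _).le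
      have hbb : b * b⁻¹ = 1 := mul_inv_cancel₀ hb.ne'
      nlinarith
    simpa [mul_assoc] using this
  rw [MeasureTheory.integral_const_mul, integral_zexp hb, ← div_eq_inv_mul] at h1
  exact h1

lemma hasDeriv2 {z : ℝ} (hz : 0 < z) :
    HasDerivAt (fun z : ℝ => -(z⁻¹ * Real.exp (-z^2/2)))
      ((1 + z⁻¹^2) * Real.exp (-z^2/2)) z := by
  have hinv : HasDerivAt (fun z : ℝ => z⁻¹) (-(z^2)⁻¹) z := by
    simpa using hasDerivAt_inv hz.ne'
  have hexp : HasDerivAt (fun z : ℝ => Real.exp (-z^2/2)) (Real.exp (-z^2/2) * (-z)) z := by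
    have h : HasDerivAt (fun z : ℝ => -z^2/2) (-z) z := by
      have := ((hasDerivAt_pow 2 z).neg).div_const 2
      simpa using this.congr_deriv (by ring)
    exact h.exp
  have := (hinv.mul hexp).neg
  apply this.congr_deriv
  have hz2 : z ≠ 0 := hz.ne'
  field_simp
  ring

lemma tendsto2 : Tendsto (fun z : ℝ => -(z⁻¹ * Real.exp (-z^2/2))) atTop (nhds 0) := by
  have h1 : Tendsto (fun z : ℝ => z⁻¹) atTop (nhds 0) := tendsto_inv_atTop_zero
  simpa using (h1.mul expsq_tendsto).neg

lemma integral_aux2 {b : ℝ} (hb : 0 < b) :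
    ∫ z in Set.Ioi b, (1 + z⁻¹^2) * Real.exp (-z^2/2) = b⁻¹ * Real.exp (-b^2/2) := by
  have h := integral_Ioi_of_hasDerivAt_of_nonneg' (g := fun z : ℝ => -(z⁻¹ * Real.exp (-z^2/2)))
    (g' := fun z => (1 + z⁻¹^2) * Real.exp (-z^2/2)) (a := b) (l := 0)
    (fun z hz => hasDeriv2 (hb.trans_le hz))
    (fun z _ => mul_nonneg (by positivity) (Real.exp_pos _).le)
    tendsto2
  simpa using h

lemma integrableOn_aux2 {b : ℝ} (hb : 0 < b) :
    IntegrableOn (fun z : ℝ => (1 + z⁻¹^2) * Real.exp (-z^2/2)) (Set.Ioi b) :=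
  integrableOn_Ioi_deriv_of_nonneg' (g := fun z : ℝ => -(z⁻¹ * Real.exp (-z^2/2)))
    (fun z hz => hasDeriv2 (hb.trans_le hz))
    (fun z _ => mul_nonneg (by positivity) (Real.exp_pos _).le)
    tendsto2

lemma Gt_ge {b : ℝ} (hb : 0 < b) : b * Real.exp (-b^2/2) / (b^2 + 1) ≤ Gt b := by
  have key : b⁻¹ * Real.exp (-b^2/2) ≤ (1 + b⁻¹^2) * Gt b := by
    have h1 : ∫ z in Set.Ioi b, (1 + z⁻¹^2) * Real.exp (-z^2/2)
        ≤ ∫ z in Set.Ioi b, (1 + b⁻¹^2) * Real.exp (-z^2/2) := by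
      apply setIntegral_mono_on (integrableOn_aux2 hb) ((expsq_integrableOn b).const_mul _)
        measurableSet_Ioi
      intro z hz
      have hz' : b ≤ z := le_of_lt hz
      apply mul_le_mul_of_nonneg_right _ (Real.exp_pos _).le
      have : z⁻¹ ≤ b⁻¹ := inv_anti₀ hb hz'
      have hz0 : 0 < z := hb.trans hz
      nlinarith [inv_nonneg.mpr hz0.le]
    rw [integral_aux2 hb, MeasureTheory.integral_const_mul] at h1
    exact h1
  have hb2 : (0:ℝ) < b^2 + 1 := by positivity
  rw [div_le_iff₀ hb2]
  have he : 1 + b⁻¹^2 = (b^2+1) / b^2 := by field_simp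
  rw [he] at key
  have hb2' : (0:ℝ) < b^2 := by positivity
  rw [div_mul_eq_mul_div, le_div_iff₀ hb2'] at key
  have h3 : b⁻¹ * Real.exp (-b^2/2) * b^2 = b * Real.exp (-b^2/2) := by
    field_simp
  linarith

lemma Gt_pos {b : ℝ} (hb : 0 < b) : 0 < Gt b :=
  lt_of_lt_of_le (by positivity) (Gt_ge hb)

/-- The chi-squared distribution with one degree of freedom: the law of `Z^2`
for `Z` a standard normal random variable. -/
noncomputable def chiSq1 : Measure ℝ :=
  Measure.map (fun z : ℝ => z ^ 2) (gaussianReal 0 1)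

lemma measurable_sq' : Measurable (fun z : ℝ => z ^ 2) := measurable_id.pow_const 2

instance : IsProbabilityMeasure chiSq1 :=
  Measure.isProbabilityMeasure_map measurable_sq'.aemeasurable

lemma pdf01 (z : ℝ) : gaussianPDFReal 0 1 z = (Real.sqrt (2*π))⁻¹ * Real.exp (-z^2/2) := by
  simp [gaussianPDFReal]

lemma preimage_sq_Iic {y : ℝ} (hy : 0 ≤ y) :
    (fun z : ℝ => z ^ 2) ⁻¹' (Set.Iic y) = Set.Icc (-Real.sqrt y) (Real.sqrt y) := by
  ext z
  simp only [Set.mem_preimage, Set.mem_Iic, Set.mem_Icc]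
  constructor
  · intro h
    have habs : |z| ≤ Real.sqrt y := by
      rw [← Real.sqrt_sq_eq_abs]
      exact Real.sqrt_le_sqrt h
    exact abs_le.mp habs
  · rintro ⟨h1, h2⟩
    have := sq_le_sq' h1 h2
    rwa [Real.sq_sqrt hy] at this

lemma integral_pdf_Ioi (b : ℝ) :
    ∫ z in Set.Ioi b, gaussianPDFReal 0 1 z = (Real.sqrt (2*π))⁻¹ * Gt b := by
  simp_rw [pdf01]
  rw [MeasureTheory.integral_const_mul]
  rfl

lemma chiSq1_Iic_toReal {y : ℝ} (hy : 0 ≤ y) :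
    (chiSq1 (Set.Iic y)).toReal = 1 - 2 * (Real.sqrt (2*π))⁻¹ * Gt (Real.sqrt y) := by
  set b := Real.sqrt y with hb
  have hb0 : 0 ≤ b := Real.sqrt_nonneg y
  have hpdfInt : Integrable (gaussianPDFReal 0 1) := integrable_gaussianPDFReal 0 1
  have h1 : chiSq1 (Set.Iic y) = gaussianReal 0 1 (Set.Icc (-b) b) := by
    rw [chiSq1, Measure.map_apply measurable_sq' measurableSet_Iic, preimage_sq_Iic hy]
  have h2 : gaussianReal 0 1 (Set.Icc (-b) b)
      = ENNReal.ofReal (∫ z in Set.Icc (-b) b, gaussianPDFReal 0 1 z) :=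
    gaussianReal_apply_eq_integral 0 one_ne_zero _
  have hnonneg : 0 ≤ ∫ z in Set.Icc (-b) b, gaussianPDFReal 0 1 z :=
    setIntegral_nonneg measurableSet_Icc fun z _ => gaussianPDFReal_nonneg 0 1 z
  rw [h1, h2, ENNReal.toReal_ofReal hnonneg]
  -- symmetry: ∫ over Iio (-b) equals ∫ over Ioi b
  have hsym : ∫ z in Set.Iio (-b), gaussianPDFReal 0 1 z
      = ∫ z in Set.Ioi b, gaussianPDFReal 0 1 z := by
    rw [← integral_Iic_eq_integral_Iio, ← integral_comp_neg_Ioi]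
    congr 1
    ext z
    rw [pdf01, pdf01]
    ring_nf
  have hsplit : (∫ z in Set.Iio (-b), gaussianPDFReal 0 1 z)
      + (∫ z in Set.Icc (-b) b, gaussianPDFReal 0 1 z)
      = ∫ z in Set.Iic b, gaussianPDFReal 0 1 z := by
    rw [← setIntegral_union ((Set.Iio_disjoint_Ici le_rfl).mono_right Set.Icc_subset_Ici_self)
      measurableSet_Icc hpdfInt.integrableOn hpdfInt.integrableOn,
      Set.Iio_union_Icc_eq_Iic (neg_le_self hb0)]
  have htot : (∫ z in Set.Iic b, gaussianPDFReal 0 1 z)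
      + (∫ z in Set.Ioi b, gaussianPDFReal 0 1 z) = 1 := by
    rw [intervalIntegral.integral_Iic_add_Ioi hpdfInt.integrableOn hpdfInt.integrableOn]
    exact integral_gaussianPDFReal_eq_one 0 one_ne_zero
  have hI := integral_pdf_Ioi b
  rw [hI] at htot
  rw [hI] at hsym
  linarith [hsplit, htot, hsym]

lemma pow_one_sub_tendsto {q : ℕ → ℝ} {c : ℝ}
    (hqpos : ∀ᶠ n in atTop, 0 < q n)
    (hnq : Tendsto (fun n : ℕ => (n : ℝ) * q n) atTop (nhds c)) :
    Tendsto (fun n : ℕ => (1 - q n) ^ n) atTop (nhds (Real.exp (-c))) := by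
  -- q n → 0
  have hq0 : Tendsto q atTop (nhds 0) := by
    have h1 : Tendsto (fun n : ℕ => ((n : ℝ) * q n) * (n : ℝ)⁻¹) atTop (nhds (c * 0)) :=
      hnq.mul tendsto_inv_atTop_nhds_zero_nat
    rw [mul_zero] at h1
    apply h1.congr'
    filter_upwards [eventually_ge_atTop 1] with n hn
    have : (n : ℝ) ≠ 0 := by positivity
    field_simp
  -- ratio log(1 - q n) / (-(q n)) → 1
  have hslope : Tendsto (fun y : ℝ => Real.log y / (y - 1)) (nhdsWithin 1 {(1:ℝ)}ᶜ) (nhds 1) := by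
    have h := hasDerivAt_iff_tendsto_slope.mp (Real.hasDerivAt_log one_ne_zero)
    simp only [slope_def_field, Real.log_one, inv_one] at h
    apply h.congr
    intro y
    rw [slope_def_field, Real.log_one]
    simp [div_eq_inv_mul]
  have hcomp : Tendsto (fun n : ℕ => (1 - q n)) atTop (nhdsWithin 1 {(1:ℝ)}ᶜ) := by
    rw [tendsto_nhdsWithin_iff]
    constructor
    · have := (tendsto_const_nhds (x := (1:ℝ)) (f := atTop (α := ℕ))).sub hq0
      simpa using this
    · filter_upwards [hqpos] with n hn
      simp only [Set.mem_compl_iff, Set.mem_singleton_iff]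
      intro h
      have : q n = 0 := by linarith [sub_eq_self.mp h]
      exact hn.ne' this
  have hratio : Tendsto (fun n : ℕ => Real.log (1 - q n) / (-(q n))) atTop (nhds 1) := by
    have := hslope.comp hcomp
    apply this.congr
    intro n
    simp only [Function.comp_apply]
    congr 1
    ring
  -- n * log (1 - q n) → -c
  have hlog : Tendsto (fun n : ℕ => (n : ℝ) * Real.log (1 - q n)) atTop (nhds (-c)) := by
    have h1 : Tendsto (fun n : ℕ => ((n : ℝ) * q n) * -(Real.log (1 - q n) / (-(q n))))
        atTop (nhds (c * -1)) := hnq.mul hratio.neg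
    rw [mul_neg_one] at h1
    apply h1.congr'
    filter_upwards [hqpos] with n hn
    field_simp
  have hfinal : Tendsto (fun n : ℕ => Real.exp ((n : ℝ) * Real.log (1 - q n)))
      atTop (nhds (Real.exp (-c))) := (Real.continuous_exp.tendsto _).comp hlog
  apply hfinal.congr'
  have hqsmall : ∀ᶠ n in atTop, q n < 1 := by
    have := hq0.eventually (eventually_lt_nhds (by norm_num : (0:ℝ) < 1))
    exact this
  filter_upwards [hqsmall] with n hn
  have hpos : 0 < 1 - q n := by linarith
  rw [← Real.exp_log hpos, ← Real.exp_nat_mul, Real.exp_log hpos]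

section Asymp
variable {x : ℝ} {y : ℕ → ℝ}
  (hy : ∀ n : ℕ, y n = 2 * Real.log n - Real.log (Real.log n) - Real.log π + 2 * x)

include hy

lemma y_tendsto_atTop : Tendsto y atTop atTop := by
  apply tendsto_atTop_mono' atTop
    (show ∀ᶠ n : ℕ in atTop, Real.log n - Real.log π + 2 * x ≤ y n from ?_) ?_
  · filter_upwards [eventually_ge_atTop 1] with n hn
    rw [hy]
    have h1 : (0:ℝ) ≤ Real.log n := Real.log_natCast_nonneg n
    have h2 : Real.log (Real.log n) ≤ Real.log n := Real.log_le_self h1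
    linarith
  · apply tendsto_atTop_add_const_right
    apply tendsto_atTop_add_const_right
    exact Real.tendsto_log_atTop.comp tendsto_natCast_atTop_atTop

lemma logn_div_y_tendsto : Tendsto (fun n : ℕ => Real.log n / y n) atTop (nhds (1/2)) := by
  have hlogTop : Tendsto (fun n : ℕ => Real.log n) atTop atTop :=
    Real.tendsto_log_atTop.comp tendsto_natCast_atTop_atTop
  have hll : Tendsto (fun n : ℕ => Real.log (Real.log n) / Real.log n) atTop (nhds 0) := by
    have h := Real.isLittleO_log_id_atTop.tendsto_div_nhds_zero
    exact h.comp hlogTop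
  have hinv : Tendsto (fun n : ℕ => (Real.log n)⁻¹) atTop (nhds 0) :=
    hlogTop.inv_tendsto_atTop
  have hmain : Tendsto (fun n : ℕ => y n / Real.log n) atTop (nhds 2) := by
    have h2 : Tendsto (fun n : ℕ =>
        2 - Real.log (Real.log n) / Real.log n - Real.log π * (Real.log n)⁻¹
          + 2 * x * (Real.log n)⁻¹) atTop (nhds (2 - 0 - Real.log π * 0 + 2 * x * 0)) := by
      exact (((tendsto_const_nhds.sub hll).sub (tendsto_const_nhds.mul hinv)).add
        (tendsto_const_nhds.mul hinv))
    rw [show (2:ℝ) - 0 - Real.log π * 0 + 2 * x * 0 = 2 by ring] at h2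
    apply h2.congr'
    filter_upwards [hlogTop.eventually (eventually_gt_atTop 0)] with n hn
    rw [hy]
    field_simp
  have h3 : Tendsto (fun n : ℕ => (y n / Real.log n)⁻¹) atTop (nhds 2⁻¹) :=
    hmain.inv₀ (by norm_num)
  rw [show ((2:ℝ))⁻¹ = 1/2 by norm_num] at h3
  apply h3.congr
  intro n
  rw [inv_div]

lemma n_exp_eq {n : ℕ} (hn : 2 ≤ n) :
    (n : ℝ) * Real.exp (-(y n) / 2)
      = Real.sqrt π * Real.sqrt (Real.log n) * Real.exp (-x) := by
  have hn1 : (1:ℝ) < n := by exact_mod_cast hn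
  have hlogpos : 0 < Real.log n := Real.log_pos hn1
  have hnpos : (0:ℝ) < n := by linarith
  have hexp : ∀ u : ℝ, 0 < u → Real.exp (Real.log u / 2) = Real.sqrt u := by
    intro u hu
    rw [← Real.log_sqrt hu.le, Real.exp_log (Real.sqrt_pos.mpr hu)]
  have key : -(y n) / 2 = -Real.log n + Real.log (Real.log n) / 2 + Real.log π / 2 + (-x) := by
    rw [hy]; ring
  rw [key, Real.exp_add, Real.exp_add, Real.exp_add, hexp _ hlogpos, hexp _ Real.pi_pos,
    Real.exp_neg, Real.exp_log hnpos]
  field_simp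
end Asymp

lemma const_sqrt : 2 * (Real.sqrt (2*π))⁻¹ * Real.sqrt π = Real.sqrt 2 := by
  rw [Real.sqrt_mul (by norm_num : (0:ℝ) ≤ 2)]
  have h2 : (0:ℝ) < Real.sqrt 2 := Real.sqrt_pos.mpr (by norm_num)
  have hp : (0:ℝ) < Real.sqrt π := Real.sqrt_pos.mpr Real.pi_pos
  have h22 : Real.sqrt 2 * Real.sqrt 2 = 2 := Real.mul_self_sqrt (by norm_num)
  field_simp
  nlinarith

section Asymp2
variable {x : ℝ} {y : ℕ → ℝ}
  (hy : ∀ n : ℕ, y n = 2 * Real.log n - Real.log (Real.log n) - Real.log π + 2 * x)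

include hy

lemma U_eq {n : ℕ} (hn : 2 ≤ n) (hy1 : 1 ≤ y n) :
    2 * (Real.sqrt (2*π))⁻¹ * ((n:ℝ) * Real.exp (-(y n)/2) / Real.sqrt (y n))
      = Real.sqrt 2 * Real.exp (-x) * Real.sqrt (Real.log n / y n) := by
  rw [n_exp_eq hy hn, Real.sqrt_div (Real.log_natCast_nonneg n)]
  have hs : (0:ℝ) < Real.sqrt (y n) := Real.sqrt_pos.mpr (by linarith)
  have hc := const_sqrt
  have h22 : Real.sqrt 2 * Real.sqrt 2 = 2 := Real.mul_self_sqrt (by norm_num)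
  field_simp
  linear_combination (-(Real.sqrt (Real.log n) * Real.sqrt 2)) * (Real.sqrt_mul (by norm_num : (0:ℝ) ≤ 2) π) + (-(Real.sqrt π * Real.sqrt (Real.log n))) * h22

lemma U_tendsto :
    Tendsto (fun n : ℕ =>
      2 * (Real.sqrt (2*π))⁻¹ * ((n:ℝ) * Real.exp (-(y n)/2) / Real.sqrt (y n)))
      atTop (nhds (Real.exp (-x))) := by
  have hlim : Tendsto (fun n : ℕ => Real.sqrt 2 * Real.exp (-x) * Real.sqrt (Real.log n / y n))
      atTop (nhds (Real.sqrt 2 * Real.exp (-x) * Real.sqrt (1/2))) :=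
    tendsto_const_nhds.mul ((Real.continuous_sqrt.tendsto (1/2)).comp (logn_div_y_tendsto hy))
  have hval : Real.sqrt 2 * Real.exp (-x) * Real.sqrt (1/2) = Real.exp (-x) := by
    rw [mul_comm (Real.sqrt 2) (Real.exp (-x)), mul_assoc, ← Real.sqrt_mul (by norm_num : (0:ℝ) ≤ 2)]
    norm_num
  rw [hval] at hlim
  apply hlim.congr'
  filter_upwards [eventually_ge_atTop 2,
    (y_tendsto_atTop hy).eventually (eventually_ge_atTop 1)] with n hn hy1
  exact (U_eq hy hn hy1).symm

lemma ratio_tendsto : Tendsto (fun n : ℕ => y n / (y n + 1)) atTop (nhds 1) := by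
  have h1 : Tendsto (fun n : ℕ => y n + 1) atTop atTop :=
    tendsto_atTop_add_const_right atTop 1 (y_tendsto_atTop hy)
  have h2 : Tendsto (fun n : ℕ => 1 - (y n + 1)⁻¹) atTop (nhds (1 - 0)) :=
    tendsto_const_nhds.sub h1.inv_tendsto_atTop
  rw [sub_zero] at h2
  apply h2.congr'
  filter_upwards [(y_tendsto_atTop hy).eventually (eventually_ge_atTop 1)] with n hy1
  have : y n + 1 ≠ 0 := by linarith
  field_simp
  ring

lemma nq_tendsto :
    Tendsto (fun n : ℕ => (n:ℝ) * (2 * (Real.sqrt (2*π))⁻¹ * Gt (Real.sqrt (y n))))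
      atTop (nhds (Real.exp (-x))) := by
  set c2 : ℝ := 2 * (Real.sqrt (2*π))⁻¹ with hc2
  have hc2pos : 0 < c2 := by
    have : (0:ℝ) < Real.sqrt (2*π) := Real.sqrt_pos.mpr (by positivity)
    positivity
  set U : ℕ → ℝ := fun n => c2 * ((n:ℝ) * Real.exp (-(y n)/2) / Real.sqrt (y n)) with hU
  set L : ℕ → ℝ := fun n => U n * (y n / (y n + 1)) with hL
  have hUt : Tendsto U atTop (nhds (Real.exp (-x))) := U_tendsto hy
  have hLt : Tendsto L atTop (nhds (Real.exp (-x) * 1)) := hUt.mul (ratio_tendsto hy)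
  rw [mul_one] at hLt
  apply tendsto_of_tendsto_of_tendsto_of_le_of_le' hLt hUt
  · -- L n ≤ n * (c2 * Gt (√ (y n)))
    filter_upwards [(y_tendsto_atTop hy).eventually (eventually_ge_atTop 1)] with n hy1
    have hy0 : (0:ℝ) ≤ y n := by linarith
    set s := Real.sqrt (y n) with hsdef
    have hs : 0 < s := Real.sqrt_pos.mpr (by linarith)
    have hss : s * s = y n := Real.mul_self_sqrt hy0
    have hsq : s ^ 2 = y n := by rw [sq]; exact hss
    have h2 : s * Real.exp (-(y n)/2) / (y n + 1) ≤ Gt s := by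
      have := Gt_ge hs
      rw [hsq] at this
      convert this using 3
    have hLeq : L n = (n:ℝ) * (c2 * (s * Real.exp (-(y n)/2) / (y n + 1))) := by
      show U n * (y n / (y n + 1)) = _
      rw [hU]
      simp only
      rw [← hss]
      have hne : s ≠ 0 := hs.ne'
      have hne2 : s * s + 1 ≠ 0 := by positivity
      field_simp
      ring
      rw [Real.sqrt_sq hs.le]
    rw [hLeq]
    apply mul_le_mul_of_nonneg_left _ (Nat.cast_nonneg n)
    exact mul_le_mul_of_nonneg_left h2 hc2pos.le
  · -- n * (c2 * Gt (√ (y n))) ≤ U n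
    filter_upwards [(y_tendsto_atTop hy).eventually (eventually_ge_atTop 1)] with n hy1
    have hy0 : (0:ℝ) ≤ y n := by linarith
    set s := Real.sqrt (y n) with hsdef
    have hs : 0 < s := Real.sqrt_pos.mpr (by linarith)
    have hsq : s ^ 2 = y n := Real.sq_sqrt hy0
    have h1 : Gt s ≤ Real.exp (-(y n)/2) / s := by
      have := Gt_le hs
      rw [hsq] at this
      convert this using 2
    have hUeq : U n = (n:ℝ) * (c2 * (Real.exp (-(y n)/2) / s)) := by
      show c2 * ((n:ℝ) * Real.exp (-(y n)/2) / s) = _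
      ring
    rw [hUeq]
    apply mul_le_mul_of_nonneg_left _ (Nat.cast_nonneg n)
    exact mul_le_mul_of_nonneg_left h1 hc2pos.le
end Asymp2


/-- Gumbel limit for the maximum of i.i.d. chi-squared(1) random variables:
with `t n = 2 log n - log log n - log π`, the normalized maximum
`(X_{(1)}(n) - t n)/2` converges in distribution to the standard Gumbel law. -/
theorem max_chiSq_gumbel_limit
    {Ω : Type*} [MeasureSpace Ω] [IsProbabilityMeasure (ℙ : Measure Ω)]
    (X : ℕ → Ω → ℝ) (hXmeas : ∀ i, Measurable (X i))
    (hXindep : iIndepFun X ℙ)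
    (hXdist : ∀ i, Measure.map (X i) ℙ = chiSq1)
    (t : ℕ → ℝ) (ht : ∀ n, t n = 2 * Real.log n - Real.log (Real.log n) - Real.log π)
    (x : ℝ) :
    Tendsto
      (fun n : ℕ =>
        (ℙ {ω | ((⨆ i : Fin n, X i ω) - t n) / 2 ≤ x}).toReal)
      atTop (nhds (Real.exp (-Real.exp (-x)))) := by
  set y : ℕ → ℝ := fun n => t n + 2 * x with hydef
  have hylog : ∀ n : ℕ, y n = 2 * Real.log n - Real.log (Real.log n) - Real.log π + 2 * x := by
    intro n
    show t n + 2 * x = _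
    rw [ht n]
  set q : ℕ → ℝ := fun n => 2 * (Real.sqrt (2*π))⁻¹ * Gt (Real.sqrt (y n)) with hqdef
  have hnq : Tendsto (fun n : ℕ => (n:ℝ) * q n) atTop (nhds (Real.exp (-x))) := nq_tendsto hylog
  have hqpos : ∀ᶠ n in atTop, 0 < q n := by
    filter_upwards [(y_tendsto_atTop hylog).eventually (eventually_ge_atTop 1)] with n h1
    have hs : 0 < Real.sqrt (y n) := Real.sqrt_pos.mpr (by linarith)
    have hG := Gt_pos hs
    have : (0:ℝ) < Real.sqrt (2*π) := Real.sqrt_pos.mpr (by positivity)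
    show 0 < 2 * (Real.sqrt (2*π))⁻¹ * Gt (Real.sqrt (y n))
    positivity
  have hpow := pow_one_sub_tendsto hqpos hnq
  apply hpow.congr'
  filter_upwards [eventually_ge_atTop 2,
    (y_tendsto_atTop hylog).eventually (eventually_ge_atTop 1)] with n hn hy1
  have hy0 : (0:ℝ) ≤ y n := by linarith
  have hyn : y n = t n + 2 * x := rfl
  -- rewrite the event
  have hset : {ω : Ω | ((⨆ i : Fin n, X i ω) - t n) / 2 ≤ x}
      = ⋂ i ∈ Finset.range n, X i ⁻¹' Set.Iic (y n) := by
    haveI : Nonempty (Fin n) := ⟨⟨0, by omega⟩⟩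
    ext ω
    simp only [Set.mem_setOf_eq, Set.mem_iInter, Finset.mem_range, Set.mem_preimage,
      Set.mem_Iic]
    rw [div_le_iff₀ (by norm_num : (0:ℝ) < 2), sub_le_iff_le_add,
      ciSup_le_iff (Set.Finite.bddAbove (Set.finite_range _))]
    constructor
    · intro h i hi
      have := h ⟨i, hi⟩
      simp only at this
      rw [hyn]
      linarith
    · intro h i
      have := h i i.isLt
      rw [hyn] at this
      linarith
  have hone : ∀ i, ℙ (X i ⁻¹' Set.Iic (y n)) = chiSq1 (Set.Iic (y n)) := fun i => by
    rw [← hXdist i, Measure.map_apply (hXmeas i) measurableSet_Iic]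
  have hmeasure : ℙ {ω : Ω | ((⨆ i : Fin n, X i ω) - t n) / 2 ≤ x}
      = chiSq1 (Set.Iic (y n)) ^ n := by
    rw [hset, hXindep.meas_biInter (S := Finset.range n)
      (fun i _ => ⟨Set.Iic (y n), measurableSet_Iic, rfl⟩),
      Finset.prod_congr rfl (fun i _ => hone i), Finset.prod_const, Finset.card_range]
  rw [hmeasure, ENNReal.toReal_pow, chiSq1_Iic_toReal hy0]
end

section
/- For any j ∈ K* and any ρ > 0, the inequality P[ c̃_j² ≤ max_{i ∈ {1,…,n}\K*} c̃_i² ] ≤ 2 π^{−1/2} ρ^{−1/2} n^{−ρ} holds for all sufficiently large n. -/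
set_option autoImplicit false
set_option maxHeartbeats 1000000

open MeasureTheory ProbabilityTheory Filter Real

section AuxGauss
open Set

lemma gauss_tail_Ici {t : ℝ} (ht : 1 ≤ t) :
    gaussianReal 0 1 {x | t ≤ x} ≤ ENNReal.ofReal (Real.exp (-(t^2)/2)) := by
  have ht0 : (0:ℝ) < t := lt_of_lt_of_le one_pos ht
  rw [gaussianReal_apply_eq_integral 0 one_ne_zero]
  apply ENNReal.ofReal_le_ofReal
  have hset : {x : ℝ | t ≤ x} = Ici t := rfl
  rw [hset, integral_Ici_eq_integral_Ioi]
  have hint : IntegrableOn (fun x : ℝ => (Real.sqrt (2*π))⁻¹ * Real.exp (t^2/2) * Real.exp (-t * x)) (Ioi t) :=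
    (exp_neg_integrableOn_Ioi t ht0).const_mul _
  have h1 : ∫ x in Ioi t, gaussianPDFReal 0 1 x
      ≤ ∫ x in Ioi t, (Real.sqrt (2*π))⁻¹ * Real.exp (t^2/2) * Real.exp (-t * x) := by
    apply setIntegral_mono_on (integrable_gaussianPDFReal 0 1).restrict hint measurableSet_Ioi
    intro x _
    simp only [gaussianPDFReal, mul_one, NNReal.coe_one, sub_zero, one_div]
    rw [mul_assoc, ← Real.exp_add]
    apply mul_le_mul_of_nonneg_left _ (by positivity)
    apply Real.exp_le_exp.2
    nlinarith [sq_nonneg (x - t)]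
  refine h1.trans ?_
  have h2 : ∫ x in Ioi t, (Real.sqrt (2*π))⁻¹ * Real.exp (t^2/2) * Real.exp (-t * x)
      = (Real.sqrt (2*π))⁻¹ * Real.exp (t^2/2) * (t⁻¹ * Real.exp (-(t*t))) := by
    rw [MeasureTheory.integral_const_mul]
    congr 1
    have := integral_comp_mul_right_Ioi (fun y => Real.exp (-y)) t ht0
    simp only [smul_eq_mul] at this
    rw [show (fun x => Real.exp (-t * x)) = (fun x => Real.exp (-(x * t))) by ext x; ring_nf]
    rw [this, integral_exp_neg_Ioi]
  rw [h2]
  have hs : (1:ℝ) ≤ Real.sqrt (2*π) := by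
    rw [show (1:ℝ) = Real.sqrt 1 by simp]
    exact Real.sqrt_le_sqrt (by nlinarith [Real.pi_gt_three])
  calc (Real.sqrt (2*π))⁻¹ * Real.exp (t^2/2) * (t⁻¹ * Real.exp (-(t*t)))
      ≤ 1 * Real.exp (t^2/2) * (1 * Real.exp (-(t*t))) := by
        apply mul_le_mul
        · exact mul_le_mul_of_nonneg_right (inv_le_one_of_one_le₀ hs) (Real.exp_pos _).le
        · exact mul_le_mul_of_nonneg_right (inv_le_one_of_one_le₀ ht) (Real.exp_pos _).le
        · positivity
        · positivity
    _ = Real.exp (-(t^2)/2) := by rw [one_mul, one_mul, ← Real.exp_add]; ring_nf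

lemma gauss_tail_sq {t : ℝ} (ht : 1 ≤ t) :
    gaussianReal 0 1 {x | t^2 ≤ x^2} ≤ ENNReal.ofReal (2 * Real.exp (-(t^2)/2)) := by
  have ht0 : (0:ℝ) < t := lt_of_lt_of_le one_pos ht
  have hsub : {x : ℝ | t^2 ≤ x^2} ⊆ {x : ℝ | t ≤ x} ∪ {x : ℝ | t ≤ -x} := by
    intro x hx
    simp only [mem_setOf_eq] at hx
    have : t ≤ |x| := by
      have h := Real.sqrt_le_sqrt hx
      rwa [Real.sqrt_sq ht0.le, Real.sqrt_sq_eq_abs] at h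
    rcases abs_cases x with ⟨h1, _⟩ | ⟨h1, _⟩
    · exact Or.inl (by simp only [mem_setOf_eq]; linarith)
    · exact Or.inr (by simp only [mem_setOf_eq]; linarith)
  have hneg : gaussianReal 0 1 {x : ℝ | t ≤ -x} = gaussianReal 0 1 {x : ℝ | t ≤ x} := by
    have hmap : (gaussianReal (0:ℝ) 1).map ((-1:ℝ) * ·)
        = gaussianReal (-1*0) (⟨(-1:ℝ)^2, sq_nonneg _⟩ * 1) := gaussianReal_map_const_mul (-1)
    have h1 : (⟨(-1:ℝ)^2, sq_nonneg _⟩ : NNReal) = 1 := by ext; norm_num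
    rw [mul_zero, show (⟨(-1:ℝ)^2, sq_nonneg _⟩ * 1 : NNReal) = 1 from (mul_one _).trans h1] at hmap
    have hms : MeasurableSet {x : ℝ | t ≤ x} := measurableSet_Ici
    calc gaussianReal 0 1 {x : ℝ | t ≤ -x}
        = gaussianReal 0 1 (((-1:ℝ) * ·) ⁻¹' {x : ℝ | t ≤ x}) := by
          congr 1; ext x; simp
      _ = (gaussianReal 0 1).map ((-1:ℝ) * ·) {x : ℝ | t ≤ x} := by
          rw [Measure.map_apply (measurable_const_mul _) hms]
      _ = gaussianReal 0 1 {x : ℝ | t ≤ x} := by rw [hmap]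
  calc gaussianReal 0 1 {x | t^2 ≤ x^2}
      ≤ gaussianReal 0 1 ({x : ℝ | t ≤ x} ∪ {x : ℝ | t ≤ -x}) := measure_mono hsub
    _ ≤ gaussianReal 0 1 {x : ℝ | t ≤ x} + gaussianReal 0 1 {x : ℝ | t ≤ -x} := measure_union_le _ _
    _ = gaussianReal 0 1 {x : ℝ | t ≤ x} + gaussianReal 0 1 {x : ℝ | t ≤ x} := by rw [hneg]
    _ ≤ ENNReal.ofReal (Real.exp (-(t^2)/2)) + ENNReal.ofReal (Real.exp (-(t^2)/2)) :=
        add_le_add (gauss_tail_Ici ht) (gauss_tail_Ici ht)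
    _ = ENNReal.ofReal (2 * Real.exp (-(t^2)/2)) := by
        rw [← ENNReal.ofReal_add (Real.exp_pos _).le (Real.exp_pos _).le]; ring_nf

lemma gauss_center {μ t : ℝ} (ht : 0 ≤ t) (htμ : t ≤ |μ|) :
    gaussianReal μ 1 {x | x^2 ≤ t^2} ≤ ENNReal.ofReal (2 * t * Real.exp (-(|μ| - t)^2/2)) := by
  rw [gaussianReal_apply_eq_integral μ one_ne_zero]
  apply ENNReal.ofReal_le_ofReal
  have hset : {x : ℝ | x^2 ≤ t^2} = Icc (-t) t := by
    ext x
    rw [mem_setOf_eq, mem_Icc, ← abs_le, ← sq_abs x, ← sq_abs t, abs_of_nonneg ht,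
      pow_le_pow_iff_left₀ (abs_nonneg x) ht two_ne_zero]
  rw [hset]
  have hC : ∀ x ∈ Icc (-t) t, gaussianPDFReal μ 1 x ≤ Real.exp (-(|μ| - t)^2/2) := by
    intro x hx
    rw [mem_Icc] at hx
    simp only [gaussianPDFReal, mul_one, NNReal.coe_one, one_div]
    calc (Real.sqrt (2*π))⁻¹ * Real.exp (-(x - μ)^2 / 2)
        ≤ 1 * Real.exp (-(|μ| - t)^2/2) := by
          apply mul_le_mul
          · rw [inv_le_one_iff₀]; right
            rw [show (1:ℝ) = Real.sqrt 1 by simp]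
            exact Real.sqrt_le_sqrt (by nlinarith [Real.pi_gt_three])
          · apply Real.exp_le_exp.2
            rcases abs_cases μ with ⟨h1, h2⟩ | ⟨h1, h2⟩ <;> nlinarith
          · positivity
          · norm_num
      _ = Real.exp (-(|μ| - t)^2/2) := one_mul _
  calc ∫ x in Icc (-t) t, gaussianPDFReal μ 1 x
      ≤ ∫ _x in Icc (-t) t, Real.exp (-(|μ| - t)^2/2) := by
        apply setIntegral_mono_on (integrable_gaussianPDFReal μ 1).restrict
          (integrableOn_const measure_Icc_lt_top.ne) measurableSet_Icc hC
    _ = (volume (Icc (-t) t)).toReal * Real.exp (-(|μ| - t)^2/2) := by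
        rw [setIntegral_const, smul_eq_mul]; rfl
    _ ≤ 2 * t * Real.exp (-(|μ| - t)^2/2) := by
        apply mul_le_mul_of_nonneg_right _ (Real.exp_pos _).le
        rw [Real.volume_Icc, ENNReal.toReal_ofReal (by linarith)]
        linarith
end AuxGauss

/-- For a true component `j ∈ K*` (so that `c̃_j ~ N(√n β_j/σ, 1)` with `β_j ≠ 0`) and any
`ρ > 0`, the probability that `c̃_j²` is dominated by the largest squared coefficient of the
non-true components is at most `2 π^{-1/2} ρ^{-1/2} n^{-ρ}` for all sufficiently large `n`. -/
theorem prob_true_component_dominated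
    {Ω : Type*} [MeasureSpace Ω] [IsProbabilityMeasure (ℙ : Measure Ω)]
    (σ : ℝ) (hσ : 0 < σ)
    (Kstar : Finset ℕ) (hKne : Kstar.Nonempty) (hKpos : ∀ j ∈ Kstar, 1 ≤ j)
    (β : ℕ → ℝ) (hβ : ∀ j, β j ≠ 0 ↔ j ∈ Kstar)
    (c : ℕ → ℕ → Ω → ℝ) (hmeas : ∀ n j, Measurable (c n j))
    (hdist : ∀ n, Kstar.max' hKne < n → ∀ j ∈ Finset.Icc 1 n,
      Measure.map (c n j) ℙ = gaussianReal (Real.sqrt n * β j / σ) 1)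
    (hindep : ∀ n, Kstar.max' hKne < n →
      iIndepFun
        (fun j : (Finset.Icc 1 n : Finset ℕ) => c n (j : ℕ)) ℙ)
    (j : ℕ) (hj : j ∈ Kstar) (ρ : ℝ) (hρ : 0 < ρ) :
    ∃ N : ℕ, ∀ n ≥ N,
      (ℙ {ω | (c n j ω) ^ 2 ≤ ⨆ i ∈ (Finset.Icc 1 n \ Kstar), (c n i ω) ^ 2}).toReal
        ≤ 2 * π ^ (-(1 : ℝ) / 2) * ρ ^ (-(1 : ℝ) / 2) * (n : ℝ) ^ (-ρ) := by
  set M := Kstar.max' hKne with hM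
  set b := |β j| with hbdef
  have hb : 0 < b := abs_pos.2 ((hβ j).2 hj)
  set κ := b / σ with hκdef
  have hκ : 0 < κ := div_pos hb hσ
  set a := 2 * (ρ + 2) with hadef
  have ha : (4:ℝ) ≤ a := by rw [hadef]; linarith
  have ha0 : (0:ℝ) < a := by linarith
  set cst := 2 * π ^ (-(1 : ℝ) / 2) * ρ ^ (-(1 : ℝ) / 2) with hcstdef
  have hcst : 0 < cst := by
    have h1 : (0:ℝ) < π ^ (-(1:ℝ)/2) := Real.rpow_pos_of_pos Real.pi_pos _
    have h2 : (0:ℝ) < ρ ^ (-(1:ℝ)/2) := Real.rpow_pos_of_pos hρ _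
    positivity
  -- eventual conditions
  have hC1 : ∀ᶠ n : ℕ in atTop, M < n := eventually_gt_atTop M
  have hC2 : ∀ᶠ n : ℕ in atTop, 3 ≤ n := eventually_ge_atTop 3
  have hC3 : ∀ᶠ n : ℕ in atTop, ((8*a/κ^2)^2 : ℝ) ≤ (n:ℝ) :=
    tendsto_natCast_atTop_atTop.eventually (eventually_ge_atTop _)
  have hFt : Tendsto (fun x : ℝ => x ^ (ρ + 1/2) * Real.exp (-(κ^2/8) * x)) atTop (nhds 0) :=
    tendsto_rpow_mul_exp_neg_mul_atTop_nhds_zero _ _ (by positivity)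
  have hC4 : ∀ᶠ n : ℕ in atTop,
      (n:ℝ) ^ (ρ + 1/2) * Real.exp (-(κ^2/8) * (n:ℝ)) ≤ cst / (2*κ) :=
    tendsto_natCast_atTop_atTop.eventually
      ((hFt.eventually_lt_const (by positivity)).mono fun x hx => hx.le)
  have hC5 : ∀ᶠ n : ℕ in atTop, (4 / cst : ℝ) ≤ (n:ℝ) :=
    tendsto_natCast_atTop_atTop.eventually (eventually_ge_atTop _)
  rw [← eventually_atTop]
  filter_upwards [hC1, hC2, hC3, hC4, hC5] with n hn1 hn2 hn3 hn4 hn5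
  -- basic facts about n
  have npos : (0:ℝ) < (n:ℝ) := by exact_mod_cast (by omega : 0 < n)
  have hn3' : (3:ℝ) ≤ (n:ℝ) := by exact_mod_cast hn2
  have hlog1 : 1 ≤ Real.log n := by
    rw [Real.le_log_iff_exp_le npos]
    have := Real.exp_one_lt_d9
    linarith
  have hlogpos : 0 < Real.log n := lt_of_lt_of_le one_pos hlog1
  set t := Real.sqrt (a * Real.log n) with htdef
  have ht1 : 1 ≤ t := by
    rw [htdef, show (1:ℝ) = Real.sqrt 1 by simp]
    apply Real.sqrt_le_sqrt
    nlinarith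
  have ht0 : 0 < t := lt_of_lt_of_le one_pos ht1
  have hsn : 0 < Real.sqrt n := Real.sqrt_pos.2 npos
  set m := Real.sqrt n * b / σ with hmdef
  have hmκ : m = κ * Real.sqrt n := by rw [hmdef, hκdef]; ring
  have hm0 : 0 < m := by rw [hmκ]; positivity
  -- log n ≤ 2 * sqrt n
  have hlog2 : Real.log n ≤ 2 * Real.sqrt n := by
    have h1 : Real.log n = 2 * Real.log (Real.sqrt n) := by
      conv_lhs => rw [← Real.sq_sqrt npos.le]
      rw [Real.log_pow]
      push_cast; ring
    have h2 : Real.log (Real.sqrt n) ≤ Real.sqrt n - 1 := Real.log_le_sub_one_of_pos hsn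
    linarith
  -- 2t ≤ m
  have hsq8 : 8 * a / κ^2 ≤ Real.sqrt n := by
    rw [show (n:ℝ) = Real.sqrt n * Real.sqrt n from (Real.mul_self_sqrt npos.le).symm] at hn3
    nlinarith [Real.sqrt_nonneg (n:ℝ)]
  have h8a : 8 * a ≤ κ^2 * Real.sqrt n := by
    rw [div_le_iff₀ (by positivity)] at hsq8
    linarith [mul_comm (κ^2) (Real.sqrt n)]
  have h2tm : 2 * t ≤ m := by
    have e1 : 2 * t = Real.sqrt (4 * (a * Real.log n)) := by
      rw [show (4:ℝ) * (a * Real.log n) = 2^2 * (a * Real.log n) by ring,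
        Real.sqrt_mul (by norm_num), Real.sqrt_sq (by norm_num)]
    have e2 : m = Real.sqrt (κ^2 * n) := by
      rw [Real.sqrt_mul (by positivity), Real.sqrt_sq hκ.le, hmκ]
    rw [e1, e2]
    apply Real.sqrt_le_sqrt
    have : κ^2 * (n:ℝ) = (κ^2 * Real.sqrt n) * Real.sqrt n := by
      rw [mul_assoc, Real.mul_self_sqrt npos.le]
    nlinarith [Real.sqrt_nonneg (n:ℝ)]
  have htm : t ≤ m := by linarith
  -- the mean
  set μn := Real.sqrt n * β j / σ with hμndef
  have hμabs : |μn| = m := by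
    rw [hμndef, hmdef, abs_div, abs_mul, abs_of_nonneg (Real.sqrt_nonneg _),
      abs_of_pos hσ, ← hbdef]
  -- sets
  set S := Finset.Icc 1 n \ Kstar with hSdef
  set A : Set Ω := c n j ⁻¹' {x : ℝ | x^2 ≤ t^2} with hAdef
  set B : ℕ → Set Ω := fun i => c n i ⁻¹' {x : ℝ | t^2 ≤ x^2} with hBdef
  have hsubset : {ω | (c n j ω) ^ 2 ≤ ⨆ i ∈ S, (c n i ω) ^ 2} ⊆ A ∪ ⋃ i ∈ S, B i := by
    intro ω hω
    by_contra hc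
    simp only [Set.mem_union, Set.mem_iUnion, not_or, not_exists] at hc
    obtain ⟨hA', hB'⟩ := hc
    rw [hAdef, Set.mem_preimage, Set.mem_setOf_eq, not_le] at hA'
    have hsup : (⨆ i ∈ S, (c n i ω) ^ 2) ≤ t^2 := by
      apply Real.iSup_le _ (sq_nonneg t)
      intro i
      apply Real.iSup_le _ (sq_nonneg t)
      intro hi
      have := hB' i hi
      rw [hBdef, Set.mem_preimage, Set.mem_setOf_eq, not_le] at this
      exact this.le
    rw [Set.mem_setOf_eq] at hω
    linarith
  -- measurability of target sets
  have hmA : MeasurableSet {x : ℝ | x^2 ≤ t^2} :=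
    measurableSet_le (measurable_id.pow_const 2) measurable_const
  have hmB : MeasurableSet {x : ℝ | t^2 ≤ x^2} :=
    measurableSet_le measurable_const (measurable_id.pow_const 2)
  have hjIcc : j ∈ Finset.Icc 1 n :=
    Finset.mem_Icc.2 ⟨hKpos j hj, le_of_lt (lt_of_le_of_lt (Finset.le_max' _ j hj) hn1)⟩
  -- bound on P A
  set r1 := 2 * t * Real.exp (-(m - t)^2/2) with hr1def
  have hPA : ℙ A ≤ ENNReal.ofReal r1 := by
    rw [hAdef, ← Measure.map_apply (hmeas n j) hmA, hdist n hn1 j hjIcc]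
    have := gauss_center (μ := μn) ht0.le (by rw [hμabs]; exact htm)
    rwa [hμabs] at this
  -- bound on each P (B i)
  set r2 := 2 * Real.exp (-(t^2)/2) with hr2def
  have hPB : ∀ i ∈ S, ℙ (B i) ≤ ENNReal.ofReal r2 := by
    intro i hi
    have hiIcc : i ∈ Finset.Icc 1 n := (Finset.mem_sdiff.1 hi).1
    have hβi : β i = 0 := by
      by_contra hne
      exact (Finset.mem_sdiff.1 hi).2 ((hβ i).1 hne)
    have hmean : Real.sqrt n * β i / σ = 0 := by rw [hβi]; ring
    rw [hBdef, ← Measure.map_apply (hmeas n i) hmB, hdist n hn1 i hiIcc, hmean]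
    exact gauss_tail_sq ht1
  -- sum bound
  have hcard : S.card ≤ n := by
    have h1 : S.card ≤ (Finset.Icc 1 n).card := Finset.card_le_card Finset.sdiff_subset
    rwa [Nat.card_Icc, Nat.add_sub_cancel] at h1
  have hsum : ∑ i ∈ S, ℙ (B i) ≤ ENNReal.ofReal ((n:ℝ) * r2) := by
    calc ∑ i ∈ S, ℙ (B i) ≤ ∑ _i ∈ S, ENNReal.ofReal r2 := Finset.sum_le_sum hPB
      _ = (S.card : ENNReal) * ENNReal.ofReal r2 := by
          rw [Finset.sum_const, nsmul_eq_mul]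
      _ ≤ (n : ENNReal) * ENNReal.ofReal r2 := by
          exact mul_le_mul_left (by exact_mod_cast hcard) _
      _ = ENNReal.ofReal ((n:ℝ) * r2) := by
          rw [← ENNReal.ofReal_natCast n, ← ENNReal.ofReal_mul (by positivity)]
  -- real bounds
  have hr1bound : r1 ≤ cst/2 * (n:ℝ) ^ (-ρ) := by
    have hmt : m/2 ≤ m - t := by linarith
    have hexp : Real.exp (-(m - t)^2/2) ≤ Real.exp (-(κ^2/8) * n) := by
      apply Real.exp_le_exp.2
      have h1 : (m/2)^2 ≤ (m - t)^2 := by nlinarith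
      have h2 : (m/2)^2 = κ^2 * n / 4 := by
        rw [hmκ]
        have : Real.sqrt n ^ 2 = (n:ℝ) := Real.sq_sqrt npos.le
        nlinarith
      nlinarith
    have hsqrt_rpow : Real.sqrt n = (n:ℝ) ^ ((1:ℝ)/2) := Real.sqrt_eq_rpow (n:ℝ)
    have hsplit : (n:ℝ) ^ ((1:ℝ)/2) = (n:ℝ) ^ (ρ + 1/2) * (n:ℝ) ^ (-ρ) := by
      rw [← Real.rpow_add npos]
      congr 1
      ring
    calc r1 = 2 * t * Real.exp (-(m - t)^2/2) := hr1def
      _ ≤ m * Real.exp (-(κ^2/8) * n) := by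
          apply mul_le_mul h2tm hexp (Real.exp_pos _).le hm0.le
      _ = κ * ((n:ℝ) ^ (ρ + 1/2) * Real.exp (-(κ^2/8) * n)) * (n:ℝ) ^ (-ρ) := by
          rw [hmκ, hsqrt_rpow, hsplit]
          ring
      _ ≤ κ * (cst / (2*κ)) * (n:ℝ) ^ (-ρ) := by
          apply mul_le_mul_of_nonneg_right _ (Real.rpow_nonneg npos.le _)
          exact mul_le_mul_of_nonneg_left hn4 hκ.le
      _ = cst/2 * (n:ℝ) ^ (-ρ) := by
          rw [show κ * (cst / (2*κ)) = cst/2 by field_simp]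
  have hr2bound : (n:ℝ) * r2 ≤ cst/2 * (n:ℝ) ^ (-ρ) := by
    have htsq : t^2 = a * Real.log n := Real.sq_sqrt (by positivity)
    have hexp2 : Real.exp (-(t^2)/2) = (n:ℝ) ^ (-(ρ+2)) := by
      rw [htsq, Real.rpow_def_of_pos npos]
      congr 1
      rw [hadef]; ring
    have h2n : 2 * (n:ℝ)⁻¹ ≤ cst / 2 := by
      rw [div_le_iff₀ hcst] at hn5
      rw [inv_eq_one_div, mul_one_div, div_le_div_iff₀ npos (by norm_num)]
      nlinarith
    calc (n:ℝ) * r2 = (n:ℝ) * (2 * (n:ℝ) ^ (-(ρ+2))) := by rw [hr2def, hexp2]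
      _ = 2 * (n:ℝ)⁻¹ * (n:ℝ) ^ (-ρ) := by
          rw [show (n:ℝ) * (2 * (n:ℝ) ^ (-(ρ+2))) = 2 * ((n:ℝ)^(1:ℝ) * (n:ℝ) ^ (-(ρ+2))) by
              rw [Real.rpow_one]; ring,
            ← Real.rpow_add npos, show (1:ℝ) + -(ρ+2) = -(1:ℝ) + -ρ by ring,
            Real.rpow_add npos, Real.rpow_neg_one]
          ring
      _ ≤ cst/2 * (n:ℝ) ^ (-ρ) := by
          exact mul_le_mul_of_nonneg_right h2n (Real.rpow_nonneg npos.le _)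
  -- assemble
  have key : ℙ {ω | (c n j ω) ^ 2 ≤ ⨆ i ∈ S, (c n i ω) ^ 2}
      ≤ ENNReal.ofReal (cst * (n:ℝ) ^ (-ρ)) := by
    calc ℙ {ω | (c n j ω) ^ 2 ≤ ⨆ i ∈ S, (c n i ω) ^ 2}
        ≤ ℙ (A ∪ ⋃ i ∈ S, B i) := measure_mono hsubset
      _ ≤ ℙ A + ℙ (⋃ i ∈ S, B i) := measure_union_le _ _
      _ ≤ ℙ A + ∑ i ∈ S, ℙ (B i) := add_le_add_right (measure_biUnion_finset_le _ _) _
      _ ≤ ENNReal.ofReal r1 + ENNReal.ofReal ((n:ℝ) * r2) := add_le_add hPA hsum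
      _ = ENNReal.ofReal (r1 + (n:ℝ) * r2) := by
          rw [← ENNReal.ofReal_add (by positivity) (by positivity)]
      _ ≤ ENNReal.ofReal (cst * (n:ℝ) ^ (-ρ)) := by
          apply ENNReal.ofReal_le_ofReal
          linarith
  exact ENNReal.toReal_le_of_le_ofReal (by positivity) key
end

section
/- For any j ∈ K* and any ρ > 0, setting τ_{n,ρ} = 2(ρ+1) log n, the inequality P[ c̃_j² ≤ τ_{n,ρ} ] ≤ π^{−1/2} ρ^{−1/2} n^{−ρ} holds for all sufficiently large n. -/
set_option autoImplicit false
set_option maxHeartbeats 1000000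

open MeasureTheory ProbabilityTheory Filter Real

/-- For a true component `j ∈ K*` (so that `c̃_j ~ N(√n β_j/σ, 1)` with `β_j ≠ 0`) and any
`ρ > 0`, setting `τ_{n,ρ} = 2(ρ+1) log n`, the probability `P[c̃_j² ≤ τ_{n,ρ}]` is at most
`π^{-1/2} ρ^{-1/2} n^{-ρ}` for all sufficiently large `n`. -/
theorem prob_true_component_below_threshold
    {Ω : Type*} [MeasureSpace Ω] [IsProbabilityMeasure (ℙ : Measure Ω)]
    (σ : ℝ) (hσ : 0 < σ)
    (Kstar : Finset ℕ) (hKne : Kstar.Nonempty) (hKpos : ∀ j ∈ Kstar, 1 ≤ j)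
    (β : ℕ → ℝ) (hβ : ∀ j, β j ≠ 0 ↔ j ∈ Kstar)
    (c : ℕ → ℕ → Ω → ℝ) (hmeas : ∀ n j, Measurable (c n j))
    (hdist : ∀ n, Kstar.max' hKne < n → ∀ j ∈ Finset.Icc 1 n,
      Measure.map (c n j) ℙ = gaussianReal (Real.sqrt n * β j / σ) 1)
    (hindep : ∀ n, Kstar.max' hKne < n →
      iIndepFun
        (fun j : (Finset.Icc 1 n : Finset ℕ) => c n (j : ℕ)) ℙ)
    (j : ℕ) (hj : j ∈ Kstar) (ρ : ℝ) (hρ : 0 < ρ) :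
    ∃ N : ℕ, ∀ n ≥ N,
      (ℙ {ω | (c n j ω) ^ 2 ≤ 2 * (ρ + 1) * Real.log n}).toReal
        ≤ π ^ (-(1 : ℝ) / 2) * ρ ^ (-(1 : ℝ) / 2) * (n : ℝ) ^ (-ρ) := by
  classical
  have hβj : β j ≠ 0 := (hβ j).mpr hj
  set b : ℝ := |β j| / σ with hb_def
  have hb : 0 < b := div_pos (abs_pos.mpr hβj) hσ
  set C : ℝ := π ^ (-(1 : ℝ) / 2) * ρ ^ (-(1 : ℝ) / 2) with hC_def
  have hC : 0 < C := mul_pos (Real.rpow_pos_of_pos Real.pi_pos _) (Real.rpow_pos_of_pos hρ _)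
  -- eventual facts
  have h1 : ∀ᶠ n : ℕ in atTop, Kstar.max' hKne < n := eventually_gt_atTop _
  have h1' : ∀ᶠ n : ℕ in atTop, (1 : ℝ) ≤ (n : ℝ) := by
    filter_upwards [eventually_ge_atTop 1] with n hn
    exact_mod_cast hn
  -- log bound : eventually 2(ρ+1) log x ≤ (b/2)^2 * x
  have hρ1 : (0 : ℝ) < 2 * (ρ + 1) := by linarith
  have hεpos : (0 : ℝ) < (b / 2) ^ 2 / (2 * (ρ + 1)) := by positivity
  have hlogR : ∀ᶠ x : ℝ in atTop, 2 * (ρ + 1) * Real.log x ≤ (b / 2) ^ 2 * x := by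
    have hlo := Real.isLittleO_log_id_atTop.def hεpos
    filter_upwards [hlo, eventually_ge_atTop (1 : ℝ)] with x hx hx1
    have hxpos : (0 : ℝ) < x := lt_of_lt_of_le one_pos hx1
    have hlog0 : 0 ≤ Real.log x := Real.log_nonneg hx1
    rw [Real.norm_eq_abs, Real.norm_eq_abs, abs_of_nonneg hlog0, id,
      abs_of_nonneg hxpos.le] at hx
    have := mul_le_mul_of_nonneg_left hx hρ1.le
    calc 2 * (ρ + 1) * Real.log x ≤ 2 * (ρ + 1) * ((b / 2) ^ 2 / (2 * (ρ + 1)) * x) := this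
      _ = (b / 2) ^ 2 * x := by field_simp
  have hlog : ∀ᶠ n : ℕ in atTop, 2 * (ρ + 1) * Real.log (n : ℝ) ≤ (b / 2) ^ 2 * (n : ℝ) :=
    tendsto_natCast_atTop_atTop.eventually hlogR
  -- exponential decay bound
  have hexpR : ∀ᶠ x : ℝ in atTop,
      x ^ (ρ + 1) * Real.exp (-(b ^ 2 / 8) * x) < C / b := by
    have ht := tendsto_rpow_mul_exp_neg_mul_atTop_nhds_zero (ρ + 1) (b ^ 2 / 8)
      (by positivity)
    exact ht.eventually_lt_const (by positivity)
  have hexp : ∀ᶠ n : ℕ in atTop,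
      (n : ℝ) ^ (ρ + 1) * Real.exp (-(b ^ 2 / 8) * (n : ℝ)) < C / b :=
    tendsto_natCast_atTop_atTop.eventually hexpR
  rw [← eventually_atTop]
  filter_upwards [h1, h1', hlog, hexp] with n hn1 hn2 hn3 hn4
  -- notation
  have hn0 : (0 : ℝ) < (n : ℝ) := lt_of_lt_of_le one_pos hn2
  set μn : ℝ := Real.sqrt n * β j / σ with hμn_def
  set τ : ℝ := 2 * (ρ + 1) * Real.log n with hτ_def
  have hτ0 : 0 ≤ τ := mul_nonneg hρ1.le (Real.log_nonneg hn2)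
  set r : ℝ := Real.sqrt τ with hr_def
  have hr0 : 0 ≤ r := Real.sqrt_nonneg _
  set s : ℝ := Real.sqrt n * b / 2 with hs_def
  have hs0 : 0 ≤ s := by positivity
  -- r ≤ s
  have hrs : r ≤ s := by
    have h1 : r ≤ Real.sqrt ((b / 2) ^ 2 * (n : ℝ)) := Real.sqrt_le_sqrt hn3
    have h2 : Real.sqrt ((b / 2) ^ 2 * (n : ℝ)) = b / 2 * Real.sqrt n := by
      rw [Real.sqrt_mul (sq_nonneg _), Real.sqrt_sq (by positivity : (0:ℝ) ≤ b / 2)]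
    rw [h2] at h1
    calc r ≤ b / 2 * Real.sqrt n := h1
      _ = s := by rw [hs_def]; ring
  -- |μn| = √n * b
  have habs : |μn| = Real.sqrt n * b := by
    rw [hμn_def, hb_def, abs_div, abs_mul, abs_of_nonneg (Real.sqrt_nonneg _),
      abs_of_pos hσ, mul_div_assoc]
  -- pdf bound on the set
  have hpdf : ∀ x : ℝ, x ^ 2 ≤ τ →
      gaussianPDFReal μn 1 x ≤ Real.exp (-s ^ 2 / 2) := by
    intro x hx
    have hxabs : |x| ≤ r := Real.abs_le_sqrt hx
    have hdist : s ≤ |x - μn| := by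
      have h1 : |μn| - |x| ≤ |μn - x| := abs_sub_abs_le_abs_sub μn x
      have h2 : |μn - x| = |x - μn| := abs_sub_comm μn x
      have h3 : s ≤ |μn| - |x| := by
        rw [habs]
        have : r ≤ Real.sqrt n * b / 2 := hrs
        nlinarith [hxabs]
      linarith [h1, h2 ▸ h1]
    have hsq : s ^ 2 ≤ (x - μn) ^ 2 := by
      have := pow_le_pow_left₀ hs0 hdist 2
      rwa [sq_abs] at this
    have hexp_le : Real.exp (-(x - μn) ^ 2 / (2 * ((1 : NNReal) : ℝ)))
        ≤ Real.exp (-s ^ 2 / 2) := by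
      apply Real.exp_le_exp.mpr
      rw [NNReal.coe_one]
      linarith
    have hinv : (Real.sqrt (2 * π * ((1 : NNReal) : ℝ)))⁻¹ ≤ 1 := by
      rw [NNReal.coe_one, mul_one]
      refine inv_le_one_of_one_le₀ ?_
      rw [Real.one_le_sqrt]
      nlinarith [Real.pi_gt_three]
    calc gaussianPDFReal μn 1 x
        = (Real.sqrt (2 * π * ((1 : NNReal) : ℝ)))⁻¹
            * Real.exp (-(x - μn) ^ 2 / (2 * ((1 : NNReal) : ℝ))) := rfl
      _ ≤ 1 * Real.exp (-s ^ 2 / 2) := by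
          apply mul_le_mul hinv hexp_le (Real.exp_pos _).le zero_le_one
      _ = Real.exp (-s ^ 2 / 2) := one_mul _
  -- identify the probability with the gaussian measure
  have hjIcc : j ∈ Finset.Icc 1 n :=
    Finset.mem_Icc.mpr ⟨hKpos j hj, le_of_lt (lt_of_le_of_lt (Finset.le_max' _ _ hj) hn1)⟩
  have hmap := hdist n hn1 j hjIcc
  have hSmeas : MeasurableSet {x : ℝ | x ^ 2 ≤ τ} :=
    measurableSet_le (measurable_id.pow_const 2) measurable_const
  have hP : ℙ {ω | (c n j ω) ^ 2 ≤ τ} = gaussianReal μn 1 {x : ℝ | x ^ 2 ≤ τ} := by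
    rw [← hmap, Measure.map_apply (hmeas n j) hSmeas]
    rfl
  -- set is Icc
  have hSet : {x : ℝ | x ^ 2 ≤ τ} = Set.Icc (-r) r := by
    ext x
    simp only [Set.mem_setOf_eq, Set.mem_Icc]
    exact Real.sq_le hτ0
  -- integral bound
  have hInt : (gaussianReal μn 1 {x : ℝ | x ^ 2 ≤ τ}).toReal
      ≤ 2 * r * Real.exp (-s ^ 2 / 2) := by
    rw [gaussianReal_apply_eq_integral μn one_ne_zero, ENNReal.toReal_ofReal
      (setIntegral_nonneg hSmeas fun x _ => gaussianPDFReal_nonneg _ _ _)]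
    have hmono : ∫ x in {x : ℝ | x ^ 2 ≤ τ}, gaussianPDFReal μn 1 x
        ≤ ∫ _ in {x : ℝ | x ^ 2 ≤ τ}, Real.exp (-s ^ 2 / 2) := by
      apply setIntegral_mono_on
      · exact (integrable_gaussianPDFReal μn 1).integrableOn
      · rw [hSet]
        exact integrableOn_const (measure_Icc_lt_top.ne)
      · exact hSmeas
      · exact fun x hx => hpdf x hx
    have hconst : ∫ _ in {x : ℝ | x ^ 2 ≤ τ}, Real.exp (-s ^ 2 / 2)
        = 2 * r * Real.exp (-s ^ 2 / 2) := by
      rw [hSet, setIntegral_const, measureReal_def, Real.volume_Icc, smul_eq_mul,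
        ENNReal.toReal_ofReal (by linarith : (0:ℝ) ≤ r - -r)]
      ring
    linarith [hmono, hconst ▸ hmono]
  -- s^2 / 2 = n * b^2 / 8
  have hs2 : s ^ 2 = (n : ℝ) * b ^ 2 / 4 := by
    rw [hs_def]
    rw [div_pow, mul_pow, Real.sq_sqrt hn0.le]
    norm_num
  -- final chain
  have hsqrt_le : Real.sqrt (n : ℝ) ≤ (n : ℝ) := by
    have hnsq : (n : ℝ) ≤ (n : ℝ) ^ 2 := by
      rw [sq]; exact le_mul_of_one_le_left hn0.le hn2
    have := Real.sqrt_le_sqrt hnsq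
    rwa [Real.sqrt_sq hn0.le] at this
  have hfinal : 2 * r * Real.exp (-s ^ 2 / 2)
      ≤ C * (n : ℝ) ^ (-ρ) := by
    have h2r : 2 * r ≤ (n : ℝ) * b := by
      have : 2 * r ≤ 2 * s := by linarith
      have hsb : 2 * s = Real.sqrt n * b := by rw [hs_def]; ring
      calc 2 * r ≤ 2 * s := by linarith
        _ = Real.sqrt n * b := hsb
        _ ≤ (n : ℝ) * b := mul_le_mul_of_nonneg_right hsqrt_le hb.le
    have hE : Real.exp (-s ^ 2 / 2) = Real.exp (-(b ^ 2 / 8) * (n : ℝ)) := by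
      rw [hs2]; ring_nf
    have hnρ : (0 : ℝ) < (n : ℝ) ^ ρ := Real.rpow_pos_of_pos hn0 ρ
    have hrpow : (n : ℝ) ^ (ρ + 1) = (n : ℝ) ^ ρ * (n : ℝ) := by
      rw [Real.rpow_add hn0, Real.rpow_one]
    have hkey : (n : ℝ) * b * Real.exp (-(b ^ 2 / 8) * (n : ℝ)) ≤ C * (n : ℝ) ^ (-ρ) := by
      rw [Real.rpow_neg hn0.le, ← div_eq_mul_inv, le_div_iff₀ hnρ]
      have h5 : b * ((n : ℝ) ^ (ρ + 1) * Real.exp (-(b ^ 2 / 8) * (n : ℝ)))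
          ≤ b * (C / b) := mul_le_mul_of_nonneg_left hn4.le hb.le
      rw [mul_div_cancel₀ C hb.ne'] at h5
      calc (n : ℝ) * b * Real.exp (-(b ^ 2 / 8) * (n : ℝ)) * (n : ℝ) ^ ρ
          = b * ((n : ℝ) ^ (ρ + 1) * Real.exp (-(b ^ 2 / 8) * (n : ℝ))) := by
            rw [hrpow]; ring
        _ ≤ C := h5
    calc 2 * r * Real.exp (-s ^ 2 / 2)
        = 2 * r * Real.exp (-(b ^ 2 / 8) * (n : ℝ)) := by rw [hE]
      _ ≤ (n : ℝ) * b * Real.exp (-(b ^ 2 / 8) * (n : ℝ)) :=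
          mul_le_mul_of_nonneg_right h2r (Real.exp_pos _).le
      _ ≤ C * (n : ℝ) ^ (-ρ) := hkey
  calc (ℙ {ω | (c n j ω) ^ 2 ≤ 2 * (ρ + 1) * Real.log n}).toReal
      = (gaussianReal μn 1 {x : ℝ | x ^ 2 ≤ τ}).toReal := by rw [← hτ_def, hP]
    _ ≤ 2 * r * Real.exp (-s ^ 2 / 2) := hInt
    _ ≤ C * (n : ℝ) ^ (-ρ) := hfinal
end

section
/- For any ρ > 0, the probability that not all of the k* largest absolute values come from true components satisfies P[Ē_n*] ≤ k* π^{−1/2} ρ^{−1/2} n^{−ρ} for all sufficiently large n. -/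
set_option autoImplicit false

open MeasureTheory ProbabilityTheory Filter Real
open scoped ENNReal NNReal

lemma my_gaussian_tail (μ s : ℝ) (hs : 0 ≤ s) :
    gaussianReal μ 1 {x | μ + s ≤ x} ≤ ENNReal.ofReal (Real.exp (-s^2/2)) := by
  rw [gaussianReal_apply μ one_ne_zero]
  have hpt : ∀ x ∈ {x : ℝ | μ + s ≤ x},
      gaussianPDF μ 1 x ≤ ENNReal.ofReal (Real.exp (-s^2/2)) * gaussianPDF (μ + s) 1 x := by
    intro x hx
    simp only [Set.mem_setOf_eq] at hx
    rw [gaussianPDF, gaussianPDF, ← ENNReal.ofReal_mul (Real.exp_nonneg _)]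
    apply ENNReal.ofReal_le_ofReal
    rw [gaussianPDFReal, gaussianPDFReal]
    rw [mul_left_comm, ← Real.exp_add]
    gcongr
    push_cast
    nlinarith [hx, hs]
  calc ∫⁻ x in {x : ℝ | μ + s ≤ x}, gaussianPDF μ 1 x
      ≤ ∫⁻ x in {x : ℝ | μ + s ≤ x},
          ENNReal.ofReal (Real.exp (-s^2/2)) * gaussianPDF (μ + s) 1 x :=
        setLIntegral_mono ((measurable_const.mul (measurable_gaussianPDF _ _))) hpt
    _ ≤ ∫⁻ x, ENNReal.ofReal (Real.exp (-s^2/2)) * gaussianPDF (μ + s) 1 x :=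
        setLIntegral_le_lintegral _ _
    _ = ENNReal.ofReal (Real.exp (-s^2/2)) := by
        rw [lintegral_const_mul _ (measurable_gaussianPDF _ _),
          lintegral_gaussianPDF_eq_one _ one_ne_zero, mul_one]

lemma my_gaussian_tail_lower (μ s : ℝ) (hs : 0 ≤ s) :
    gaussianReal μ 1 {x | x ≤ μ - s} ≤ ENNReal.ofReal (Real.exp (-s^2/2)) := by
  have hmap : (gaussianReal μ 1).map (fun x => (-1 : ℝ) * x)
      = gaussianReal (-μ) 1 := by
    rw [gaussianReal_map_const_mul (-1 : ℝ)]
    norm_num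
  have heq : gaussianReal μ 1 {x | x ≤ μ - s}
      = gaussianReal (-μ) 1 {x | -μ + s ≤ x} := by
    rw [← hmap, Measure.map_apply (by exact (measurable_id.const_mul _))
      (by exact measurableSet_le measurable_const measurable_id)]
    congr 1
    ext x
    simp only [Set.mem_preimage, Set.mem_setOf_eq]
    constructor <;> intro h <;> linarith
  rw [heq]
  exact my_gaussian_tail (-μ) s hs

lemma my_event_subset {n : ℕ} {Kstar : Finset ℕ} (hKpos : ∀ j ∈ Kstar, 1 ≤ j)
    (hkn : Kstar.card ≤ n) (hKn : ∀ j ∈ Kstar, j ≤ n)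
    {p : ℕ → ℕ} {g : ℕ → ℝ} (t : ℝ)
    (hbij : Set.BijOn p (Set.Icc 1 n) (Set.Icc 1 n))
    (hsort : ∀ l ∈ Set.Icc 1 n, ∀ r ∈ Set.Icc 1 n, l < r → |g (p r)| < |g (p l)|)
    (hE : ∃ l ∈ Set.Icc 1 Kstar.card, p l ∉ Kstar) :
    (∃ j, (j ∈ Finset.Icc 1 n ∧ j ∉ Kstar) ∧ t ≤ |g j|) ∨ (∃ j ∈ Kstar, |g j| ≤ t) := by
  by_contra hcon
  push_neg at hcon
  obtain ⟨h1, h2⟩ := hcon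
  obtain ⟨l, hl, hpl⟩ := hE
  obtain ⟨hl1, hl2⟩ := hl
  have hlIcc : l ∈ Set.Icc 1 n := ⟨hl1, le_trans hl2 hkn⟩
  have hplmem : p l ∈ Set.Icc 1 n := hbij.mapsTo hlIcc
  have hplt : |g (p l)| < t :=
    h1 (p l) ⟨Finset.mem_Icc.mpr ⟨hplmem.1, hplmem.2⟩, hpl⟩
  have hq : ∀ j : ℕ, ∃ q : ℕ, j ∈ Kstar → (1 ≤ q ∧ p q = j ∧ q < l) := by
    intro j
    by_cases hj : j ∈ Kstar
    · have hjI : j ∈ Set.Icc 1 n := ⟨hKpos j hj, hKn j hj⟩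
      obtain ⟨q, hqI, hpq⟩ := hbij.surjOn hjI
      refine ⟨q, fun _ => ⟨hqI.1, hpq, ?_⟩⟩
      rcases lt_trichotomy q l with h | h | h
      · exact h
      · exfalso; subst h; rw [hpq] at hpl; exact hpl hj
      · exfalso
        have := hsort l hlIcc q hqI h
        rw [hpq] at this
        have := h2 j hj
        linarith
    · exact ⟨0, fun h => absurd h hj⟩
  choose f hf using hq
  have hcard : Kstar.card ≤ (Finset.Ico 1 l).card := by
    apply Finset.card_le_card_of_injOn f
    · intro j hj
      exact Finset.mem_Ico.mpr ⟨(hf j hj).1, (hf j hj).2.2⟩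
    · intro a ha b hb hab
      rw [← (hf a ha).2.1, ← (hf b hb).2.1, hab]
  rw [Nat.card_Ico] at hcard
  omega

/-- For any `ρ > 0`, the probability that not all of the `k*` largest absolute coefficients
come from true components, i.e. `P[Ē_n*]` where `E_n* = ⋂_{l=1}^{k*} {p_l ∈ K*}`, is at most
`k* π^{-1/2} ρ^{-1/2} n^{-ρ}` for all sufficiently large `n`. -/
theorem prob_complement_Estar_bound
    {Ω : Type*} [MeasureSpace Ω] [IsProbabilityMeasure (ℙ : Measure Ω)]
    (σ : ℝ) (hσ : 0 < σ)
    (Kstar : Finset ℕ) (hKne : Kstar.Nonempty) (hKpos : ∀ j ∈ Kstar, 1 ≤ j)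
    (β : ℕ → ℝ) (hβ : ∀ j, β j ≠ 0 ↔ j ∈ Kstar)
    (c : ℕ → ℕ → Ω → ℝ) (hmeas : ∀ n j, Measurable (c n j))
    (hdist : ∀ n, Kstar.max' hKne < n → ∀ j ∈ Finset.Icc 1 n,
      Measure.map (c n j) ℙ = gaussianReal (Real.sqrt n * β j / σ) 1)
    (hindep : ∀ n, Kstar.max' hKne < n →
      iIndepFun
        (fun j : (Finset.Icc 1 n : Finset ℕ) => c n (j : ℕ)) ℙ)
    (p : ℕ → Ω → ℕ → ℕ) (hpmeas : ∀ n l, Measurable fun ω => p n ω l)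
    (hp : ∀ n, Kstar.max' hKne < n → ∀ᵐ ω ∂ℙ,
      Set.BijOn (p n ω) (Set.Icc 1 n) (Set.Icc 1 n) ∧
      ∀ l ∈ Set.Icc 1 n, ∀ r ∈ Set.Icc 1 n, l < r →
        |c n (p n ω r) ω| < |c n (p n ω l) ω|)
    (ρ : ℝ) (hρ : 0 < ρ) :
    ∃ N : ℕ, ∀ n ≥ N,
      (ℙ {ω | ∃ l ∈ Set.Icc 1 Kstar.card, p n ω l ∉ Kstar}).toReal
        ≤ Kstar.card * π ^ (-(1 : ℝ) / 2) * ρ ^ (-(1 : ℝ) / 2) * (n : ℝ) ^ (-ρ) := by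
  classical
  set M := Kstar.max' hKne with hM
  have hM1 : 1 ≤ M := hKpos _ (Kstar.max'_mem hKne)
  have hkM : Kstar.card ≤ M := by
    have hsub : Kstar ⊆ Finset.Icc 1 M :=
      fun j hj => Finset.mem_Icc.mpr ⟨hKpos j hj, Finset.le_max' _ j hj⟩
    simpa [Nat.card_Icc] using Finset.card_le_card hsub
  set b := Kstar.inf' hKne (fun j => |β j|) with hbdef
  have hb : 0 < b := by
    rw [hbdef, Finset.lt_inf'_iff]
    exact fun j hj => abs_pos.mpr ((hβ j).mpr hj)
  have hble : ∀ j ∈ Kstar, b ≤ |β j| := fun j hj => Finset.inf'_le _ hj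
  set C : ℝ := π ^ (-(1:ℝ)/2) * ρ ^ (-(1:ℝ)/2) with hC
  have hC0 : 0 < C := by
    have := Real.pi_pos
    positivity
  set k : ℕ := Kstar.card with hkdef
  have hk1 : 1 ≤ k := Finset.card_pos.mpr hKne
  -- eventual conditions
  have hev1 : ∀ᶠ (n : ℕ) in atTop,
      Real.sqrt (2*(ρ+2)*Real.log n) + Real.sqrt (2*(ρ+1)*Real.log n)
        ≤ Real.sqrt n * b / σ := by
    set ε : ℝ := b^2 / σ^2 / (8*(ρ+2)) with hε
    have hε0 : 0 < ε := by positivity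
    have hlo := (Real.isLittleO_log_id_atTop.def hε0)
    have hlo' := (tendsto_natCast_atTop_atTop (R := ℝ)).eventually hlo
    filter_upwards [hlo', eventually_ge_atTop 1] with n hlog hn1
    have hn1' : (1:ℝ) ≤ (n:ℝ) := by exact_mod_cast hn1
    have hlogn : 0 ≤ Real.log n := Real.log_nonneg hn1'
    have hlog2 : Real.log n ≤ ε * n := by
      have : |Real.log n| ≤ ε * |(n:ℝ)| := by simpa [Real.norm_eq_abs, id] using hlog
      rw [abs_of_nonneg (by positivity : (0:ℝ) ≤ (n:ℝ))] at this
      exact (le_abs_self _).trans this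
    have key : 2*(ρ+2)*(ε*n) = (b/(2*σ))^2 * n := by
      rw [hε]; field_simp; ring
    have h12 : Real.sqrt (2*(ρ+1)*Real.log n) ≤ Real.sqrt (2*(ρ+2)*Real.log n) := by
      apply Real.sqrt_le_sqrt; nlinarith
    have h23 : Real.sqrt (2*(ρ+2)*Real.log n) ≤ Real.sqrt (2*(ρ+2)*(ε*n)) := by
      apply Real.sqrt_le_sqrt; nlinarith
    have h34 : Real.sqrt (2*(ρ+2)*(ε*n)) = b/(2*σ) * Real.sqrt n := by
      rw [key, Real.sqrt_mul (sq_nonneg _), Real.sqrt_sq (by positivity)]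
    have : Real.sqrt (2*(ρ+2)*Real.log n) + Real.sqrt (2*(ρ+1)*Real.log n)
        ≤ 2 * (b/(2*σ) * Real.sqrt n) := by
      rw [← h34]; linarith
    calc Real.sqrt (2*(ρ+2)*Real.log n) + Real.sqrt (2*(ρ+1)*Real.log n)
        ≤ 2 * (b/(2*σ) * Real.sqrt n) := this
      _ = Real.sqrt n * b / σ := by field_simp
  have hev2 : ∀ᶠ (n : ℕ) in atTop, (2 + (k:ℝ)) ≤ (k:ℝ) * C * n := by
    have ht : Tendsto (fun n : ℕ => (k:ℝ) * C * n) atTop atTop :=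
      (tendsto_natCast_atTop_atTop (R := ℝ)).const_mul_atTop (by positivity)
    exact ht.eventually_ge_atTop _
  have hev3 : ∀ᶠ (n : ℕ) in atTop, M < n := eventually_gt_atTop M
  obtain ⟨N, hN⟩ := eventually_atTop.mp ((hev1.and hev2).and hev3)
  refine ⟨N, fun n hn => ?_⟩
  obtain ⟨⟨h1, h2⟩, hMn⟩ := hN n hn
  -- basic facts about n
  have hn1 : 1 ≤ n := lt_of_le_of_lt hM1 hMn |>.le
  have hn0' : (0:ℝ) < (n:ℝ) := by exact_mod_cast Nat.lt_of_lt_of_le Nat.zero_lt_one hn1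
  have hlogn : 0 ≤ Real.log n := Real.log_nonneg (by exact_mod_cast hn1)
  set t : ℝ := Real.sqrt (2*(ρ+2)*Real.log n) with htdef
  set s : ℝ := Real.sqrt (2*(ρ+1)*Real.log n) with hsdef
  have ht0 : 0 ≤ t := Real.sqrt_nonneg _
  have hs0 : 0 ≤ s := Real.sqrt_nonneg _
  have ht2 : t^2 = 2*(ρ+2)*Real.log n := Real.sq_sqrt (by positivity)
  have hs2 : s^2 = 2*(ρ+1)*Real.log n := Real.sq_sqrt (by positivity)
  set A : Finset ℕ := Finset.Icc 1 n \ Kstar with hA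
  set Bad : Set Ω := (⋃ j ∈ A, {ω | t ≤ |c n j ω|}) ∪ ⋃ j ∈ Kstar, {ω | |c n j ω| ≤ t}
    with hBad
  -- a.e. inclusion
  have hsub : ∀ᵐ ω ∂ℙ, ω ∈ {ω | ∃ l ∈ Set.Icc 1 Kstar.card, p n ω l ∉ Kstar}
      → ω ∈ Bad := by
    filter_upwards [hp n hMn] with ω hω hE
    obtain ⟨hbij, hsort⟩ := hω
    have hKn : ∀ j ∈ Kstar, j ≤ n := fun j hj => (Finset.le_max' _ j hj).trans hMn.le
    have := my_event_subset hKpos (hkM.trans hMn.le) hKn (g := fun j => c n j ω) t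
      hbij hsort hE
    rcases this with ⟨j, ⟨hjI, hjK⟩, hjt⟩ | ⟨j, hj, hjt⟩
    · left
      simp only [Set.mem_iUnion]
      exact ⟨j, Finset.mem_sdiff.mpr ⟨hjI, hjK⟩, hjt⟩
    · right
      simp only [Set.mem_iUnion]
      exact ⟨j, hj, hjt⟩
  have step1 : ℙ {ω | ∃ l ∈ Set.Icc 1 Kstar.card, p n ω l ∉ Kstar} ≤ ℙ Bad :=
    measure_mono_ae hsub
  have step2 : ℙ Bad ≤ (∑ j ∈ A, ℙ {ω | t ≤ |c n j ω|})
      + ∑ j ∈ Kstar, ℙ {ω | |c n j ω| ≤ t} :=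
    (measure_union_le _ _).trans
      (add_le_add (measure_biUnion_finset_le _ _) (measure_biUnion_finset_le _ _))
  -- noise bound
  have hnoise : ∀ j ∈ A, ℙ {ω | t ≤ |c n j ω|}
      ≤ ENNReal.ofReal (2 * Real.exp (-t^2/2)) := by
    intro j hj
    obtain ⟨hjI, hjK⟩ := Finset.mem_sdiff.mp hj
    have hβ0 : β j = 0 := by
      by_contra h; exact hjK ((hβ j).mp h)
    have hmap := hdist n hMn j hjI
    rw [hβ0] at hmap
    simp only [mul_zero, zero_div] at hmap
    have heq : ℙ {ω | t ≤ |c n j ω|} = (Measure.map (c n j) ℙ) {x | t ≤ |x|} := by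
      rw [Measure.map_apply (hmeas n j)
        (measurableSet_le measurable_const measurable_abs)]
      rfl
    rw [heq, hmap]
    have hss : {x : ℝ | t ≤ |x|} ⊆ {x | 0 + t ≤ x} ∪ {x | x ≤ 0 - t} := by
      intro x hx
      simp only [Set.mem_setOf_eq] at hx
      rcases abs_cases x with ⟨h, _⟩ | ⟨h, _⟩
      · left; simp only [Set.mem_setOf_eq]; linarith
      · right; simp only [Set.mem_setOf_eq]; linarith
    calc gaussianReal 0 1 {x | t ≤ |x|}
        ≤ gaussianReal 0 1 ({x | 0 + t ≤ x} ∪ {x | x ≤ 0 - t}) := measure_mono hss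
      _ ≤ gaussianReal 0 1 {x | 0 + t ≤ x} + gaussianReal 0 1 {x | x ≤ 0 - t} :=
          measure_union_le _ _
      _ ≤ ENNReal.ofReal (Real.exp (-t^2/2)) + ENNReal.ofReal (Real.exp (-t^2/2)) :=
          add_le_add (my_gaussian_tail 0 t ht0) (my_gaussian_tail_lower 0 t ht0)
      _ = ENNReal.ofReal (2 * Real.exp (-t^2/2)) := by
          rw [← ENNReal.ofReal_add (Real.exp_nonneg _) (Real.exp_nonneg _), two_mul]
  -- signal bound
  have hsignal : ∀ j ∈ Kstar, ℙ {ω | |c n j ω| ≤ t}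
      ≤ ENNReal.ofReal (Real.exp (-s^2/2)) := by
    intro j hj
    have hjI : j ∈ Finset.Icc 1 n :=
      Finset.mem_Icc.mpr ⟨hKpos j hj, (Finset.le_max' _ j hj).trans hMn.le⟩
    have hmap := hdist n hMn j hjI
    set μj : ℝ := Real.sqrt n * β j / σ with hμj
    have heq : ℙ {ω | |c n j ω| ≤ t} = (Measure.map (c n j) ℙ) {x | |x| ≤ t} := by
      rw [Measure.map_apply (hmeas n j)
        (measurableSet_le measurable_abs measurable_const)]
      rfl
    rw [heq, hmap]
    have hsqrtn : 0 < Real.sqrt n := Real.sqrt_pos.mpr hn0'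
    have habs : t + s ≤ |μj| := by
      have h1' : Real.sqrt n * b / σ ≤ Real.sqrt n * |β j| / σ := by
        have := hble j hj
        gcongr
      have : |μj| = Real.sqrt n * |β j| / σ := by
        rw [hμj, abs_div, abs_mul, abs_of_nonneg hsqrtn.le, abs_of_pos hσ]
      rw [this]
      exact le_trans h1 h1'
    have hβj : β j ≠ 0 := (hβ j).mpr hj
    have hexp : Real.exp (-(|μj| - t)^2/2) ≤ Real.exp (-s^2/2) := by
      apply Real.exp_le_exp.mpr
      have hst : s ≤ |μj| - t := by linarith
      nlinarith
    rcases hβj.lt_or_gt with hneg | hpos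
    · -- β j < 0, μj < 0
      have hμneg : μj < 0 := by
        rw [hμj]
        exact div_neg_of_neg_of_pos (mul_neg_of_pos_of_neg hsqrtn hneg) hσ
      have habs' : t + s ≤ -μj := by rwa [abs_of_neg hμneg] at habs
      have hss : {x : ℝ | |x| ≤ t} ⊆ {x | μj + (-μj - t) ≤ x} := by
        intro x hx
        simp only [Set.mem_setOf_eq] at hx ⊢
        have := neg_abs_le x
        linarith
      calc gaussianReal μj 1 {x | |x| ≤ t}
          ≤ gaussianReal μj 1 {x | μj + (-μj - t) ≤ x} := measure_mono hss
        _ ≤ ENNReal.ofReal (Real.exp (-(-μj - t)^2/2)) :=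
            my_gaussian_tail μj _ (by linarith)
        _ ≤ ENNReal.ofReal (Real.exp (-s^2/2)) := by
            apply ENNReal.ofReal_le_ofReal
            rw [abs_of_neg hμneg] at hexp
            exact hexp
    · -- β j > 0, μj > 0
      have hμpos : 0 < μj := by
        rw [hμj]; positivity
      have habs' : t + s ≤ μj := by rwa [abs_of_pos hμpos] at habs
      have hss : {x : ℝ | |x| ≤ t} ⊆ {x | x ≤ μj - (μj - t)} := by
        intro x hx
        simp only [Set.mem_setOf_eq] at hx ⊢
        have := le_abs_self x
        linarith
      calc gaussianReal μj 1 {x | |x| ≤ t}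
          ≤ gaussianReal μj 1 {x | x ≤ μj - (μj - t)} := measure_mono hss
        _ ≤ ENNReal.ofReal (Real.exp (-(μj - t)^2/2)) :=
            my_gaussian_tail_lower μj _ (by linarith)
        _ ≤ ENNReal.ofReal (Real.exp (-s^2/2)) := by
            apply ENNReal.ofReal_le_ofReal
            rw [abs_of_pos hμpos] at hexp
            exact hexp
  -- sums
  have hAcard : A.card ≤ n := by
    have : A ⊆ Finset.Icc 1 n := Finset.sdiff_subset
    simpa [Nat.card_Icc] using Finset.card_le_card this
  have step3 : ℙ {ω | ∃ l ∈ Set.Icc 1 Kstar.card, p n ω l ∉ Kstar}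
      ≤ ENNReal.ofReal ((n:ℝ) * (2 * Real.exp (-t^2/2)) + (k:ℝ) * Real.exp (-s^2/2)) := by
    refine step1.trans (step2.trans ?_)
    have hA' : ∑ j ∈ A, ℙ {ω | t ≤ |c n j ω|}
        ≤ ENNReal.ofReal ((n:ℝ) * (2 * Real.exp (-t^2/2))) := by
      calc ∑ j ∈ A, ℙ {ω | t ≤ |c n j ω|}
          ≤ ∑ _j ∈ A, ENNReal.ofReal (2 * Real.exp (-t^2/2)) :=
            Finset.sum_le_sum hnoise
        _ = (A.card : ℝ≥0∞) * ENNReal.ofReal (2 * Real.exp (-t^2/2)) := by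
            rw [Finset.sum_const, nsmul_eq_mul]
        _ ≤ (n : ℝ≥0∞) * ENNReal.ofReal (2 * Real.exp (-t^2/2)) :=
            mul_le_mul_left (by exact_mod_cast hAcard) _
        _ = ENNReal.ofReal ((n:ℝ) * (2 * Real.exp (-t^2/2))) := by
            rw [← ENNReal.ofReal_natCast n, ← ENNReal.ofReal_mul (Nat.cast_nonneg n)]
    have hK' : ∑ j ∈ Kstar, ℙ {ω | |c n j ω| ≤ t}
        ≤ ENNReal.ofReal ((k:ℝ) * Real.exp (-s^2/2)) := by
      calc ∑ j ∈ Kstar, ℙ {ω | |c n j ω| ≤ t}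
          ≤ ∑ _j ∈ Kstar, ENNReal.ofReal (Real.exp (-s^2/2)) :=
            Finset.sum_le_sum hsignal
        _ = (k : ℝ≥0∞) * ENNReal.ofReal (Real.exp (-s^2/2)) := by
            rw [Finset.sum_const, nsmul_eq_mul]
        _ = ENNReal.ofReal ((k:ℝ) * Real.exp (-s^2/2)) := by
            rw [← ENNReal.ofReal_natCast k, ← ENNReal.ofReal_mul (Nat.cast_nonneg k)]
    calc (∑ j ∈ A, ℙ {ω | t ≤ |c n j ω|})
        + ∑ j ∈ Kstar, ℙ {ω | |c n j ω| ≤ t}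
        ≤ ENNReal.ofReal ((n:ℝ) * (2 * Real.exp (-t^2/2)))
          + ENNReal.ofReal ((k:ℝ) * Real.exp (-s^2/2)) := add_le_add hA' hK'
      _ = ENNReal.ofReal ((n:ℝ) * (2 * Real.exp (-t^2/2)) + (k:ℝ) * Real.exp (-s^2/2)) := by
          rw [← ENNReal.ofReal_add
            (mul_nonneg (Nat.cast_nonneg _) (mul_nonneg two_pos.le (Real.exp_nonneg _)))
            (mul_nonneg (Nat.cast_nonneg _) (Real.exp_nonneg _))]
  -- real-number estimate
  have hreal : (n:ℝ) * (2 * Real.exp (-t^2/2)) + (k:ℝ) * Real.exp (-s^2/2)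
      ≤ (k:ℝ) * C * (n:ℝ) ^ (-ρ) := by
    have het : Real.exp (-t^2/2) = (n:ℝ) ^ (-(ρ+2)) := by
      rw [Real.rpow_def_of_pos hn0', ht2]
      congr 1
      ring
    have hes : Real.exp (-s^2/2) = (n:ℝ) ^ (-(ρ+1)) := by
      rw [Real.rpow_def_of_pos hn0', hs2]
      congr 1
      ring
    have hnn : (n:ℝ) * (n:ℝ) ^ (-(ρ+2)) = (n:ℝ) ^ (-(ρ+1)) := by
      nth_rewrite 1 [← Real.rpow_one (n:ℝ)]
      rw [← Real.rpow_add hn0']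
      congr 1
      ring
    have hsplit : (n:ℝ) ^ (-(ρ+1)) = (n:ℝ)⁻¹ * (n:ℝ) ^ (-ρ) := by
      rw [← Real.rpow_neg_one (n:ℝ), ← Real.rpow_add hn0']
      congr 1
      ring
    have hnρ : (0:ℝ) ≤ (n:ℝ) ^ (-ρ) := Real.rpow_nonneg hn0'.le _
    calc (n:ℝ) * (2 * Real.exp (-t^2/2)) + (k:ℝ) * Real.exp (-s^2/2)
        = (2 + (k:ℝ)) * (n:ℝ) ^ (-(ρ+1)) := by
          rw [het, hes]
          rw [show (n:ℝ) * (2 * (n:ℝ) ^ (-(ρ+2))) = 2 * ((n:ℝ) * (n:ℝ) ^ (-(ρ+2))) by ring,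
            hnn]
          ring
      _ = (2 + (k:ℝ)) * (n:ℝ)⁻¹ * (n:ℝ) ^ (-ρ) := by rw [hsplit]; ring
      _ ≤ (k:ℝ) * C * (n:ℝ) ^ (-ρ) := by
          apply mul_le_mul_of_nonneg_right _ hnρ
          rw [mul_inv_le_iff₀ hn0']
          exact h2
  -- conclude
  have hfinal := step3.trans (ENNReal.ofReal_le_ofReal hreal)
  have := ENNReal.toReal_le_of_le_ofReal (mul_nonneg (mul_nonneg (Nat.cast_nonneg _) hC0.le) (Real.rpow_nonneg (Nat.cast_nonneg _) _)) hfinal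
  calc (ℙ {ω | ∃ l ∈ Set.Icc 1 k, p n ω l ∉ Kstar}).toReal
      ≤ (k:ℝ) * C * (n:ℝ) ^ (-ρ) := this
    _ = Kstar.card * π ^ (-(1:ℝ)/2) * ρ ^ (-(1:ℝ)/2) * (n:ℝ) ^ (-ρ) := by
        rw [hC, hkdef]; ring
end

section
/- For each fixed positive integer m, lim_{n→∞} E[ c̃_{p₁}^{2m} · 1_{Ē_n*} ] = 0, where c̃_{p₁} is the coefficient with the largest absolute value and 1_{Ē_n*} is the indicator of the complement of E_n*. -/
set_option autoImplicit false

open MeasureTheory ProbabilityTheory Filter Real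


lemma aux_int_pow_exp (k : ℕ) {b : ℝ} (hb : 0 < b) :
    Integrable (fun x : ℝ => x ^ (2*k) * Real.exp (-b * x^2)) := by
  have hb2 : 0 < b / 2 := by linarith
  refine Integrable.mono' (((integrable_exp_neg_mul_sq hb2).const_mul
      ((k.factorial : ℝ) * (2/b)^k))) ?_ (Filter.Eventually.of_forall fun x => ?_)
  · exact ((measurable_id.pow_const _).mul
      ((measurable_id.pow_const 2).const_mul (-b)).exp).aestronglyMeasurable
  · have hx : (0:ℝ) ≤ x ^ (2*k) := (even_two_mul k).pow_nonneg x
    rw [Real.norm_eq_abs, abs_of_nonneg (mul_nonneg hx (Real.exp_nonneg _))]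
    have ht : (0:ℝ) ≤ b/2 * x^2 := by positivity
    have h1 : (b/2 * x^2) ^ k / (k.factorial : ℝ) ≤ Real.exp (b/2 * x^2) := by
      calc (b/2 * x^2) ^ k / (k.factorial : ℝ)
          ≤ ∑ i ∈ Finset.range (k+1), (b/2 * x^2) ^ i / (i.factorial : ℝ) := by
            refine Finset.single_le_sum (f := fun i => (b/2 * x^2) ^ i / (i.factorial : ℝ))
              (fun i _ => by positivity) (Finset.self_mem_range_succ k)
        _ ≤ Real.exp (b/2 * x^2) := Real.sum_le_exp_of_nonneg ht _
    have h2 : x ^ (2*k) ≤ (k.factorial : ℝ) * (2/b)^k * Real.exp (b/2 * x^2) := by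
      have hfac : (0:ℝ) < (k.factorial : ℝ) := by positivity
      have := (div_le_iff₀ hfac).mp h1
      calc x ^ (2*k) = (x^2) ^ k := by rw [pow_mul]
        _ = (2/b) ^ k * (b/2 * x^2) ^ k := by
            rw [mul_pow, ← mul_assoc, ← mul_pow]
            have : (2/b) * (b/2) = 1 := by field_simp
            rw [this, one_pow, one_mul]
        _ ≤ (2/b) ^ k * (Real.exp (b/2 * x^2) * (k.factorial : ℝ)) := by
            refine mul_le_mul_of_nonneg_left this (by positivity)
        _ = (k.factorial : ℝ) * (2/b)^k * Real.exp (b/2 * x^2) := by ring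
    calc x ^ (2*k) * Real.exp (-b * x^2)
        ≤ ((k.factorial : ℝ) * (2/b)^k * Real.exp (b/2 * x^2)) * Real.exp (-b * x^2) :=
          mul_le_mul_of_nonneg_right h2 (Real.exp_nonneg _)
      _ = (k.factorial : ℝ) * (2/b)^k * Real.exp (-(b/2) * x^2) := by
          rw [mul_assoc, ← Real.exp_add]; ring_nf

lemma gauss_std_integrable_pow (k : ℕ) :
    Integrable (fun x : ℝ => x ^ (2*k)) (gaussianReal 0 1) := by
  rw [gaussianReal_of_var_ne_zero 0 one_ne_zero,
    integrable_withDensity_iff (measurable_gaussianPDF 0 1)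
      (Filter.Eventually.of_forall fun x => ENNReal.ofReal_lt_top)]
  have : ∀ x : ℝ, (gaussianPDF 0 1 x).toReal
      = (Real.sqrt (2 * π))⁻¹ * Real.exp (-(2⁻¹ : ℝ) * x ^ 2) := by
    intro x
    rw [gaussianPDF, ENNReal.toReal_ofReal (gaussianPDFReal_nonneg 0 1 x), gaussianPDFReal]
    norm_num
    left; ring
  simp_rw [this]
  have := (aux_int_pow_exp k (b := (2:ℝ)⁻¹) (by norm_num)).const_mul (Real.sqrt (2 * π))⁻¹
  refine this.congr' ?_ (Filter.Eventually.of_forall fun x => by ring)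
  exact (((measurable_id.pow_const _).mul
    (((measurable_id.pow_const 2).const_mul _).exp.const_mul _))).aestronglyMeasurable

lemma gauss_eq_map (μ : ℝ) :
    gaussianReal μ 1 = Measure.map (· + μ) (gaussianReal 0 1) := by
  rw [gaussianReal_map_add_const, zero_add]

lemma gauss_integrable_shift {μ : ℝ} {F : ℝ → ℝ} (hF : Measurable F)
    (h : Integrable (fun y => F (y + μ)) (gaussianReal 0 1)) :
    Integrable F (gaussianReal μ 1) := by
  rw [gauss_eq_map μ, integrable_map_measure hF.aestronglyMeasurable
    (measurable_add_const μ).aemeasurable]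
  exact h

lemma gauss_integral_shift (μ : ℝ) {F : ℝ → ℝ} (hF : Measurable F) :
    ∫ x, F x ∂(gaussianReal μ 1) = ∫ y, F (y + μ) ∂(gaussianReal 0 1) := by
  rw [gauss_eq_map μ, integral_map (measurable_add_const μ).aemeasurable
    hF.aestronglyMeasurable]

lemma pow_abs_add_le (a c : ℝ) (k : ℕ) : |a + c| ^ k ≤ 2 ^ k * (|a| ^ k + |c| ^ k) := by
  calc |a + c| ^ k ≤ (|a| + |c|) ^ k :=
        pow_le_pow_left₀ (abs_nonneg _) (abs_add_le a c) k
    _ ≤ (2 * max |a| |c|) ^ k := by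
        refine pow_le_pow_left₀ (by positivity) ?_ k
        rcases le_total |a| |c| with h | h
        · rw [max_eq_right h]; linarith [abs_nonneg a]
        · rw [max_eq_left h]; linarith [abs_nonneg c]
    _ = 2 ^ k * (max |a| |c|) ^ k := mul_pow 2 _ k
    _ ≤ 2 ^ k * (|a| ^ k + |c| ^ k) := by
        refine mul_le_mul_of_nonneg_left ?_ (by positivity)
        rcases le_total |a| |c| with h | h
        · rw [max_eq_right h]; nlinarith [pow_le_pow_left₀ (abs_nonneg a) h k, pow_nonneg (abs_nonneg a) k]
        · rw [max_eq_left h]; nlinarith [pow_le_pow_left₀ (abs_nonneg c) h k, pow_nonneg (abs_nonneg c) k]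

lemma gauss_integrable_pow (μ : ℝ) (k : ℕ) :
    Integrable (fun x : ℝ => x ^ (2*k)) (gaussianReal μ 1) := by
  refine gauss_integrable_shift (F := fun x => x ^ (2*k)) (measurable_id.pow_const _) ?_
  have hg : Integrable (fun y : ℝ => 2 ^ (2*k) * (y ^ (2*k) + |μ| ^ (2*k)))
      (gaussianReal 0 1) := by
    simpa using ((gauss_std_integrable_pow k).add
      (integrable_const (|μ| ^ (2*k)))).const_mul (2 ^ (2*k) : ℝ)
  refine Integrable.mono' hg
    ((measurable_add_const μ).pow_const _).aestronglyMeasurable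
    (Filter.Eventually.of_forall fun y => ?_)
  calc ‖(y + μ) ^ (2*k)‖ = |y + μ| ^ (2*k) := by rw [Real.norm_eq_abs, abs_pow]
    _ ≤ 2 ^ (2*k) * (|y| ^ (2*k) + |μ| ^ (2*k)) := pow_abs_add_le y μ (2*k)
    _ = 2 ^ (2*k) * (y ^ (2*k) + |μ| ^ (2*k)) := by
        rw [(even_two_mul k).pow_abs y]

lemma gauss_integral_pow_le (μ : ℝ) (k : ℕ) :
    ∫ x, x ^ (2*k) ∂(gaussianReal μ 1)
      ≤ 2 ^ (2*k) * ((∫ y, y ^ (2*k) ∂(gaussianReal 0 1)) + μ ^ (2*k)) := by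
  rw [gauss_integral_shift μ (F := fun x => x ^ (2*k)) (measurable_id.pow_const _)]
  have h1 : Integrable (fun y : ℝ => (y + μ) ^ (2*k)) (gaussianReal 0 1) := by
    have := gauss_integrable_pow μ k
    rw [gauss_eq_map μ] at this
    exact (integrable_map_measure (g := fun x : ℝ => x ^ (2*k))
      (measurable_id.pow_const _).aestronglyMeasurable
      (measurable_add_const μ).aemeasurable).mp this
  have h2 : Integrable (fun y : ℝ => 2 ^ (2*k) * (y ^ (2*k) + μ ^ (2*k)))
      (gaussianReal 0 1) :=
    ((gauss_std_integrable_pow k).add (integrable_const _)).const_mul _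
  calc ∫ y, (y + μ) ^ (2*k) ∂(gaussianReal 0 1)
      ≤ ∫ y, 2 ^ (2*k) * (y ^ (2*k) + μ ^ (2*k)) ∂(gaussianReal 0 1) := by
        refine integral_mono h1 h2 fun y => ?_
        calc (y + μ) ^ (2*k) = |y + μ| ^ (2*k) := ((even_two_mul k).pow_abs (y + μ)).symm
          _ ≤ 2 ^ (2*k) * (|y| ^ (2*k) + |μ| ^ (2*k)) := pow_abs_add_le y μ (2*k)
          _ = 2 ^ (2*k) * (y ^ (2*k) + μ ^ (2*k)) := by
              rw [(even_two_mul k).pow_abs y, (even_two_mul k).pow_abs μ]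
    _ = 2 ^ (2*k) * ((∫ y, y ^ (2*k) ∂(gaussianReal 0 1)) + μ ^ (2*k)) := by
        rw [integral_const_mul, integral_add (gauss_std_integrable_pow k) (integrable_const _),
          integral_const]
        simp

lemma gauss_integrable_cheb (μ t : ℝ) (q : ℕ) :
    Integrable (fun x : ℝ => ((x - μ)/t) ^ (2*q)) (gaussianReal μ 1) := by
  refine gauss_integrable_shift (F := fun x => ((x - μ)/t) ^ (2*q)) (((measurable_sub_const μ).div_const t).pow_const _) ?_
  simp_rw [add_sub_cancel_right, div_pow]
  exact (gauss_std_integrable_pow q).div_const _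

lemma gauss_integral_cheb (μ t : ℝ) (q : ℕ) :
    ∫ x, ((x - μ)/t) ^ (2*q) ∂(gaussianReal μ 1)
      = (∫ y, y ^ (2*q) ∂(gaussianReal 0 1)) / t ^ (2*q) := by
  rw [gauss_integral_shift μ (F := fun x => ((x - μ)/t) ^ (2*q)) (((measurable_sub_const μ).div_const t).pow_const _)]
  simp_rw [add_sub_cancel_right, div_pow]
  exact integral_div _ _

lemma perm_top_bad {n : ℕ} {K : Finset ℕ} {P : ℕ → ℕ} {cc : ℕ → ℝ} {t : ℝ}
    (hKsub : K ⊆ Finset.Icc 1 n) (hK1 : 1 ≤ K.card)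
    (bij : Set.BijOn P (Set.Icc 1 n) (Set.Icc 1 n))
    (ord : ∀ l ∈ Set.Icc 1 n, ∀ r ∈ Set.Icc 1 n, l < r → |cc (P r)| < |cc (P l)|)
    (hE : ∃ l ∈ Set.Icc 1 K.card, P l ∉ K) :
    (∃ j ∈ K, |cc j| ≤ t) ∨ (∃ j ∈ Finset.Icc 1 n, j ∉ K ∧ t ≤ |cc j|) := by
  by_contra hcon
  push_neg at hcon
  obtain ⟨h1, h2⟩ := hcon
  obtain ⟨l, hl, hlK⟩ := hE
  have hcard : K.card ≤ n := by
    have := Finset.card_le_card hKsub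
    simpa using this
  have hlIcc : l ∈ Set.Icc 1 n := ⟨hl.1, hl.2.trans hcard⟩
  have hPl : P l ∈ Set.Icc 1 n := bij.mapsTo hlIcc
  have hPl' : |cc (P l)| < t := h2 (P l) (by simpa [Finset.mem_Icc] using hPl) hlK
  -- the preimage set of K
  set T : Finset ℕ := (Finset.Icc 1 n).filter (fun r => P r ∈ K) with hT
  have hTicc : ∀ r ∈ T, r ∈ Set.Icc 1 n := by
    intro r hr
    rw [hT, Finset.mem_filter, Finset.mem_Icc] at hr
    exact ⟨hr.1.1, hr.1.2⟩
  have hinj : Set.InjOn P T := fun a ha b hb hab =>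
    bij.injOn (hTicc a ha) (hTicc b hb) hab
  have himg : T.image P = K := by
    apply Finset.Subset.antisymm
    · intro j hj
      rw [Finset.mem_image] at hj
      obtain ⟨r, hr, hrj⟩ := hj
      rw [hT, Finset.mem_filter] at hr
      exact hrj ▸ hr.2
    · intro j hj
      have hjIcc : (j : ℕ) ∈ Set.Icc 1 n := by
        have := hKsub hj
        rw [Finset.mem_Icc] at this
        exact ⟨this.1, this.2⟩
      obtain ⟨r, hr, hrj⟩ := bij.surjOn hjIcc
      rw [Finset.mem_image]
      refine ⟨r, ?_, hrj⟩
      rw [hT, Finset.mem_filter, Finset.mem_Icc]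
      exact ⟨⟨hr.1, hr.2⟩, by rw [hrj]; exact hj⟩
  have hTcard : T.card = K.card := by
    rw [← himg, Finset.card_image_of_injOn hinj]
  -- find r ∈ T with K.card < r
  have hbig : ∃ r ∈ T, K.card < r := by
    by_contra hsmall
    push_neg at hsmall
    have hsub : T ⊆ (Finset.Icc 1 K.card).erase l := by
      intro r hr
      have hrIcc := hTicc r hr
      refine Finset.mem_erase.mpr ⟨?_, ?_⟩
      · rintro rfl
        rw [hT, Finset.mem_filter] at hr
        exact hlK hr.2
      · rw [Finset.mem_Icc]
        exact ⟨hrIcc.1, hsmall r hr⟩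
    have hle := Finset.card_le_card hsub
    rw [Finset.card_erase_of_mem (by rw [Finset.mem_Icc]; exact hl)] at hle
    simp only [Nat.card_Icc] at hle
    omega
  obtain ⟨r, hr, hrbig⟩ := hbig
  have hrIcc := hTicc r hr
  have hPrK : P r ∈ K := by
    rw [hT, Finset.mem_filter] at hr
    exact hr.2
  have hlt : l < r := lt_of_le_of_lt hl.2 hrbig
  have := ord l hlIcc r hrIcc hlt
  have := h1 (P r) hPrK
  linarith


set_option maxHeartbeats 1000000 in
/-- For each fixed positive integer `m`, the expectation of `c̃_{p₁}^{2m}` (the `2m`-th power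
of the coefficient with the largest absolute value) restricted to the complement of the
event `E_n* = ⋂_{l=1}^{k*} {p_l ∈ K*}` tends to zero as `n → ∞`. -/
theorem expectation_max_on_complement_Estar_tendsto_zero
    {Ω : Type*} [MeasureSpace Ω] [IsProbabilityMeasure (ℙ : Measure Ω)]
    (σ : ℝ) (hσ : 0 < σ)
    (Kstar : Finset ℕ) (hKne : Kstar.Nonempty) (hKpos : ∀ j ∈ Kstar, 1 ≤ j)
    (β : ℕ → ℝ) (hβ : ∀ j, β j ≠ 0 ↔ j ∈ Kstar)
    (c : ℕ → ℕ → Ω → ℝ) (hmeas : ∀ n j, Measurable (c n j))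
    (hdist : ∀ n, Kstar.max' hKne < n → ∀ j ∈ Finset.Icc 1 n,
      Measure.map (c n j) ℙ = gaussianReal (Real.sqrt n * β j / σ) 1)
    (hindep : ∀ n, Kstar.max' hKne < n →
      iIndepFun
        (fun j : (Finset.Icc 1 n : Finset ℕ) => c n (j : ℕ)) ℙ)
    (p : ℕ → Ω → ℕ → ℕ) (hpmeas : ∀ n l, Measurable fun ω => p n ω l)
    (hp : ∀ n, Kstar.max' hKne < n → ∀ᵐ ω ∂ℙ,
      Set.BijOn (p n ω) (Set.Icc 1 n) (Set.Icc 1 n) ∧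
      ∀ l ∈ Set.Icc 1 n, ∀ r ∈ Set.Icc 1 n, l < r →
        |c n (p n ω r) ω| < |c n (p n ω l) ω|)
    (m : ℕ) (hm : 1 ≤ m) :
    Tendsto
      (fun n : ℕ =>
        ∫ ω in {ω | ∃ l ∈ Set.Icc 1 Kstar.card, p n ω l ∉ Kstar},
          (c n (p n ω 1) ω) ^ (2 * m) ∂ℙ)
      atTop (nhds 0) := by
  classical
  -- even-power nonnegativity helper
  have hev : ∀ (x : ℝ) (k : ℕ), 0 ≤ x ^ (2 * k) := fun x k => (even_two_mul k).pow_nonneg x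
  -- constants
  set q : ℕ := 2 * m + 4 with hq_def
  set Mq : ℝ := ∫ y, y ^ (2 * q) ∂(gaussianReal 0 1) with hMq_def
  set Mm : ℝ := ∫ y, y ^ (2 * (2 * m)) ∂(gaussianReal 0 1) with hMm_def
  have hMq0 : 0 ≤ Mq := integral_nonneg fun y => hev y q
  have hMm0 : 0 ≤ Mm := integral_nonneg fun y => hev y (2 * m)
  set b : ℝ := (Kstar.image fun j => |β j|).min' (hKne.image _) with hb_def
  have hbmem : b ∈ Kstar.image fun j => |β j| := Finset.min'_mem _ _
  have hb_le : ∀ j ∈ Kstar, b ≤ |β j| := by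
    intro j hj
    rw [hb_def]
    exact Finset.min'_le _ _ (Finset.mem_image_of_mem _ hj)
  have hb : 0 < b := by
    obtain ⟨j, hj, hjb⟩ := Finset.mem_image.mp hbmem
    rw [← hjb]
    exact abs_pos.mpr ((hβ j).mpr hj)
  set B : ℝ := (Kstar.image fun j => |β j|).max' (hKne.image _) with hB_def
  have hB_le : ∀ j ∈ Kstar, |β j| ≤ B := by
    intro j hj
    rw [hB_def]
    exact Finset.le_max' (Kstar.image fun j => |β j|) (|β j|)
      (Finset.mem_image_of_mem _ hj)
  have hB0 : 0 ≤ B := by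
    obtain ⟨j, hj⟩ := hKne
    exact (abs_nonneg (β j)).trans (hB_le j hj)
  set C₁ : ℝ := 2 ^ (2 * (2 * m)) * (Mm + (B / σ) ^ (2 * (2 * m))) with hC₁_def
  set C₂ : ℝ := Mq * ((4 * σ ^ 2) / b ^ 2) ^ q / 4 with hC₂_def
  have hC₁0 : 0 ≤ C₁ := by positivity
  have hC₂0 : 0 ≤ C₂ := by positivity
  set C : ℝ := C₁ + C₂ with hC_def
  set N : ℕ := Kstar.max' hKne with hN_def
  have hN1 : 1 ≤ N := hKpos _ (Kstar.max'_mem hKne)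
  -- squeeze
  refine squeeze_zero' ?_ ?_ (tendsto_const_div_atTop_nhds_zero_nat C)
  · exact Filter.Eventually.of_forall fun n => integral_nonneg fun ω => hev _ m
  · rw [Filter.eventually_atTop]
    refine ⟨N + 1, fun n hnN => ?_⟩
    have hn : N < n := hnN
    have hn1 : 1 ≤ n := le_trans hN1 (Nat.le_of_lt hn)
    have hn0R : (0 : ℝ) < (n : ℝ) := by exact_mod_cast Nat.lt_of_lt_of_le Nat.zero_lt_one hn1
    have hn1R : (1 : ℝ) ≤ (n : ℝ) := by exact_mod_cast hn1
    have hKsub : Kstar ⊆ Finset.Icc 1 n := by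
      intro j hj
      rw [Finset.mem_Icc]
      refine ⟨hKpos j hj, le_trans ?_ (Nat.le_of_lt hn)⟩
      rw [hN_def]
      exact Finset.le_max' _ _ hj
    have hcardK : 1 ≤ Kstar.card := Finset.card_pos.mpr hKne
    -- parameters
    set μf : ℕ → ℝ := fun j => Real.sqrt n * β j / σ with hμf_def
    set t : ℝ := Real.sqrt n * b / (2 * σ) with ht_def
    have hsqrt_pos : 0 < Real.sqrt n := Real.sqrt_pos.mpr hn0R
    have ht : 0 < t := by positivity
    have hμ : ∀ j ∈ Kstar, 2 * t ≤ |μf j| := by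
      intro j hj
      have : |μf j| = Real.sqrt n * |β j| / σ := by
        rw [hμf_def, abs_div, abs_mul, abs_of_nonneg (Real.sqrt_nonneg _), abs_of_pos hσ]
      rw [this, ht_def]
      have h2 : 2 * (Real.sqrt ↑n * b / (2 * σ)) = Real.sqrt ↑n * b / σ := by
        field_simp
      rw [h2]
      gcongr
      exact hb_le j hj
    have hμ0 : ∀ j, j ∉ Kstar → μf j = 0 := by
      intro j hj
      have : β j = 0 := by
        by_contra h
        exact hj ((hβ j).mp h)
      rw [hμf_def]
      simp [this]
    set ε : ℝ := 1 / (n : ℝ) ^ (2 * m + 2) with hε_def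
    have hε : 0 < ε := by positivity
    -- per-coordinate integrability and integral identities
    have hInt1 : ∀ i ∈ Finset.Icc 1 n,
        Integrable (fun ω => (c n i ω) ^ (2 * (2 * m))) ℙ := by
      intro i hi
      have hgi := gauss_integrable_pow (Real.sqrt n * β i / σ) (2 * m)
      rw [← hdist n hn i hi] at hgi
      exact (integrable_map_measure (g := fun x : ℝ => x ^ (2 * (2 * m)))
        (measurable_id.pow_const _).aestronglyMeasurable (hmeas n i).aemeasurable).mp hgi
    have hEq1 : ∀ i ∈ Finset.Icc 1 n,
        ∫ ω, (c n i ω) ^ (2 * (2 * m)) ∂ℙ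
          = ∫ x, x ^ (2 * (2 * m)) ∂(gaussianReal (Real.sqrt n * β i / σ) 1) := by
      intro i hi
      rw [← hdist n hn i hi, integral_map (φ := c n i)
        (f := fun x : ℝ => x ^ (2 * (2 * m))) (hmeas n i).aemeasurable
        (measurable_id.pow_const _).aestronglyMeasurable]
    have hInt2 : ∀ j ∈ Finset.Icc 1 n,
        Integrable (fun ω => ((c n j ω - μf j) / t) ^ (2 * q)) ℙ := by
      intro j hj
      have hgi := gauss_integrable_cheb (μf j) t q
      rw [hμf_def, ← hdist n hn j hj] at hgi
      exact (integrable_map_measure (g := fun x : ℝ => ((x - μf j) / t) ^ (2 * q))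
        (((measurable_sub_const _).div_const t).pow_const _).aestronglyMeasurable
        (hmeas n j).aemeasurable).mp hgi
    have hEq2 : ∀ j ∈ Finset.Icc 1 n,
        ∫ ω, ((c n j ω - μf j) / t) ^ (2 * q) ∂ℙ = Mq / t ^ (2 * q) := by
      intro j hj
      rw [← gauss_integral_cheb (μf j) t q]
      conv_rhs => rw [hμf_def]
      rw [← hdist n hn j hj, integral_map (φ := c n j)
        (f := fun x : ℝ => ((x - μf j) / t) ^ (2 * q)) (hmeas n j).aemeasurable
        (((measurable_sub_const _).div_const t).pow_const _).aestronglyMeasurable]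
    -- the dominating function
    set g : Ω → ℝ := fun ω =>
      ε * (∑ i ∈ Finset.Icc 1 n, (c n i ω) ^ (2 * (2 * m)))
        + (1 / (4 * ε)) * (∑ j ∈ Finset.Icc 1 n, ((c n j ω - μf j) / t) ^ (2 * q))
      with hg_def
    have hg0 : ∀ ω, 0 ≤ g ω := by
      intro ω
      refine add_nonneg (mul_nonneg hε.le ?_) (mul_nonneg (by positivity) ?_)
      · exact Finset.sum_nonneg fun i _ => hev _ _
      · exact Finset.sum_nonneg fun j _ => hev _ _
    have hg_int : Integrable g ℙ := by
      refine Integrable.add ?_ ?_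
      · exact (integrable_finset_sum _ hInt1).const_mul ε
      · exact (integrable_finset_sum _ hInt2).const_mul _
    -- measurability of the event and of Y
    set E : Set Ω := {ω | ∃ l ∈ Set.Icc 1 Kstar.card, p n ω l ∉ Kstar} with hE_def
    have hEmeas : MeasurableSet E := by
      have : E = ⋃ l ∈ Set.Icc 1 Kstar.card, (fun ω => p n ω l) ⁻¹' ((↑Kstar : Set ℕ)ᶜ) := by
        ext ω
        simp [hE_def, Set.mem_iUnion]
      rw [this]
      exact MeasurableSet.biUnion (Set.to_countable _) fun l _ =>
        (hpmeas n l) (Set.to_countable (↑Kstar : Set ℕ)).measurableSet.compl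
    have hY : Measurable (fun ω => c n (p n ω 1) ω) := by
      have h1 : Measurable (fun z : Ω × ℕ => c n z.2 z.1) :=
        measurable_from_prod_countable_left fun j => hmeas n j
      exact h1.comp (measurable_id.prodMk (hpmeas n 1))
    -- pointwise a.e. domination on E
    have hptwise : ∀ᵐ ω ∂ℙ, ω ∈ E → (c n (p n ω 1) ω) ^ (2 * m) ≤ g ω := by
      filter_upwards [hp n hn] with ω hgood hEω
      obtain ⟨bij, ord⟩ := hgood
      have hdisj := perm_top_bad (cc := fun j => c n j ω) (t := t) hKsub hcardK bij ord hEω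
      -- the Chebyshev sum is at least 1
      have hsum1 : 1 ≤ ∑ j ∈ Finset.Icc 1 n, ((c n j ω - μf j) / t) ^ (2 * q) := by
        rcases hdisj with ⟨j, hjK, hjle⟩ | ⟨j, hjIcc, hjK, hjge⟩
        · have habs : t ≤ |c n j ω - μf j| := by
            have h2t := hμ j hjK
            have := abs_sub_abs_le_abs_sub (μf j) (c n j ω)
            have habs' : |μf j - c n j ω| = |c n j ω - μf j| := abs_sub_comm _ _
            linarith
          have hterm : 1 ≤ ((c n j ω - μf j) / t) ^ (2 * q) := by
            rw [← (even_two_mul q).pow_abs]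
            refine one_le_pow₀ ?_
            rw [abs_div, abs_of_pos ht, le_div_iff₀ ht, one_mul]
            exact habs
          calc (1 : ℝ) ≤ ((c n j ω - μf j) / t) ^ (2 * q) := hterm
            _ ≤ _ := Finset.single_le_sum (f := fun j => ((c n j ω - μf j) / t) ^ (2 * q))
                (fun i _ => hev _ _) (hKsub hjK)
        · have hterm : 1 ≤ ((c n j ω - μf j) / t) ^ (2 * q) := by
            rw [hμ0 j hjK, sub_zero, ← (even_two_mul q).pow_abs]
            refine one_le_pow₀ ?_
            rw [abs_div, abs_of_pos ht, le_div_iff₀ ht, one_mul]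
            exact hjge
          calc (1 : ℝ) ≤ ((c n j ω - μf j) / t) ^ (2 * q) := hterm
            _ ≤ _ := Finset.single_le_sum (f := fun j => ((c n j ω - μf j) / t) ^ (2 * q))
                (fun i _ => hev _ _) hjIcc
      -- the square is dominated by the first sum
      set y : ℝ := c n (p n ω 1) ω with hy_def
      have hp1 : p n ω 1 ∈ Set.Icc 1 n := bij.mapsTo ⟨le_refl 1, hn1⟩
      have hp1' : p n ω 1 ∈ Finset.Icc 1 n := by
        rw [Finset.mem_Icc]; exact ⟨hp1.1, hp1.2⟩
      have hf2 : (y ^ (2 * m)) ^ 2 ≤ ∑ i ∈ Finset.Icc 1 n, (c n i ω) ^ (2 * (2 * m)) := by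
        have : (y ^ (2 * m)) ^ 2 = y ^ (2 * (2 * m)) := by
          rw [← pow_mul, mul_comm (2 * m) 2]
        rw [this]
        exact Finset.single_le_sum (f := fun i => (c n i ω) ^ (2 * (2 * m)))
          (fun i _ => hev _ _) hp1'
      have hinv : ε * (1 / (4 * ε)) = 1 / 4 := by
        field_simp
      have amgm : y ^ (2 * m) ≤ ε * (y ^ (2 * m)) ^ 2 + 1 / (4 * ε) := by
        nlinarith [sq_nonneg (2 * ε * (y ^ (2 * m)) - 1), hε, hinv,
          mul_pos hε hε]
      have h1' : ε * (y ^ (2 * m)) ^ 2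
          ≤ ε * (∑ i ∈ Finset.Icc 1 n, (c n i ω) ^ (2 * (2 * m))) :=
        mul_le_mul_of_nonneg_left hf2 hε.le
      have h2' : 1 / (4 * ε)
          ≤ (1 / (4 * ε)) * (∑ j ∈ Finset.Icc 1 n, ((c n j ω - μf j) / t) ^ (2 * q)) := by
        nth_rewrite 1 [← mul_one (1 / (4 * ε))]
        exact mul_le_mul_of_nonneg_left hsum1 (by positivity)
      calc y ^ (2 * m) ≤ ε * (y ^ (2 * m)) ^ 2 + 1 / (4 * ε) := amgm
        _ ≤ g ω := by rw [hg_def]; dsimp only; linarith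
    -- integral chain
    have hfE_int : IntegrableOn (fun ω => (c n (p n ω 1) ω) ^ (2 * m)) E ℙ := by
      refine Integrable.mono' hg_int.integrableOn
        (hY.pow_const _).aestronglyMeasurable.restrict ?_
      rw [ae_restrict_iff' hEmeas]
      filter_upwards [hptwise] with ω hω hωE
      rw [Real.norm_eq_abs, abs_of_nonneg (hev _ m)]
      exact hω hωE
    have step1 : ∫ ω in E, (c n (p n ω 1) ω) ^ (2 * m) ∂ℙ ≤ ∫ ω in E, g ω ∂ℙ :=
      setIntegral_mono_on_ae hfE_int hg_int.integrableOn hEmeas hptwise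
    have step2 : ∫ ω in E, g ω ∂ℙ ≤ ∫ ω, g ω ∂ℙ :=
      setIntegral_le_integral hg_int (Filter.Eventually.of_forall hg0)
    -- compute/bound the integral of g
    have hgval : ∫ ω, g ω ∂ℙ
        = ε * (∑ i ∈ Finset.Icc 1 n, ∫ ω, (c n i ω) ^ (2 * (2 * m)) ∂ℙ)
          + (1 / (4 * ε)) * ((n : ℝ) * (Mq / t ^ (2 * q))) := by
      rw [hg_def]
      rw [integral_add ((integrable_finset_sum _ hInt1).const_mul ε)
        ((integrable_finset_sum _ hInt2).const_mul _)]
      rw [integral_const_mul, integral_const_mul,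
        integral_finset_sum _ hInt1, integral_finset_sum _ hInt2]
      congr 1
      rw [Finset.sum_congr rfl hEq2, Finset.sum_const, Nat.card_Icc]
      simp [nsmul_eq_mul]
    have hsum_bound : ∑ i ∈ Finset.Icc 1 n, ∫ ω, (c n i ω) ^ (2 * (2 * m)) ∂ℙ
        ≤ (n : ℝ) * (C₁ * (n : ℝ) ^ (2 * m)) := by
      have hbound : ∀ i ∈ Finset.Icc 1 n,
          ∫ ω, (c n i ω) ^ (2 * (2 * m)) ∂ℙ ≤ C₁ * (n : ℝ) ^ (2 * m) := by
        intro i hi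
        rw [hEq1 i hi]
        have h1 := gauss_integral_pow_le (Real.sqrt n * β i / σ) (2 * m)
        have h2 : (Real.sqrt n * β i / σ) ^ (2 * (2 * m))
            ≤ (n : ℝ) ^ (2 * m) * (B / σ) ^ (2 * (2 * m)) := by
          by_cases hiK : i ∈ Kstar
          · have habs : |Real.sqrt n * β i / σ| = Real.sqrt n * |β i| / σ := by
              rw [abs_div, abs_mul, abs_of_nonneg (Real.sqrt_nonneg _), abs_of_pos hσ]
            calc (Real.sqrt n * β i / σ) ^ (2 * (2 * m))
                = (Real.sqrt n * |β i| / σ) ^ (2 * (2 * m)) := by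
                  rw [← (even_two_mul (2 * m)).pow_abs, habs]
              _ = (Real.sqrt n) ^ (2 * (2 * m)) * (|β i| / σ) ^ (2 * (2 * m)) := by
                  rw [mul_div_assoc, mul_pow]
              _ ≤ (n : ℝ) ^ (2 * m) * (B / σ) ^ (2 * (2 * m)) := by
                  have e1 : (Real.sqrt n) ^ (2 * (2 * m)) = (n : ℝ) ^ (2 * m) := by
                    rw [pow_mul, Real.sq_sqrt (Nat.cast_nonneg n)]
                  rw [e1]
                  gcongr
                  exact hB_le i hiK
          · have hβi : β i = 0 := by
              by_contra h
              exact hiK ((hβ i).mp h)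
            rw [hβi, mul_zero, zero_div, zero_pow (by omega : 2 * (2 * m) ≠ 0)]
            positivity
        have h3 : Mm + (Real.sqrt n * β i / σ) ^ (2 * (2 * m))
            ≤ (Mm + (B / σ) ^ (2 * (2 * m))) * (n : ℝ) ^ (2 * m) := by
          have hnpow : (1 : ℝ) ≤ (n : ℝ) ^ (2 * m) := one_le_pow₀ hn1R
          nlinarith [pow_nonneg (by positivity : (0:ℝ) ≤ B / σ) (2 * (2 * m))]
        calc ∫ x, x ^ (2 * (2 * m)) ∂(gaussianReal (Real.sqrt n * β i / σ) 1)
            ≤ 2 ^ (2 * (2 * m)) * (Mm + (Real.sqrt n * β i / σ) ^ (2 * (2 * m))) := h1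
          _ ≤ 2 ^ (2 * (2 * m)) * ((Mm + (B / σ) ^ (2 * (2 * m))) * (n : ℝ) ^ (2 * m)) :=
              mul_le_mul_of_nonneg_left h3 (by positivity)
          _ = C₁ * (n : ℝ) ^ (2 * m) := by rw [hC₁_def]; ring
      calc ∑ i ∈ Finset.Icc 1 n, ∫ ω, (c n i ω) ^ (2 * (2 * m)) ∂ℙ
          ≤ ∑ _i ∈ Finset.Icc 1 n, C₁ * (n : ℝ) ^ (2 * m) := Finset.sum_le_sum hbound
        _ = (n : ℝ) * (C₁ * (n : ℝ) ^ (2 * m)) := by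
            rw [Finset.sum_const, Nat.card_Icc]
            simp [nsmul_eq_mul]
    -- numeric part 1
    have part1 : ε * ((n : ℝ) * (C₁ * (n : ℝ) ^ (2 * m))) ≤ C₁ / n := by
      rw [le_div_iff₀ hn0R]
      have e1 : (n : ℝ) ^ (2 * m + 2) = (n : ℝ) ^ (2 * m) * (n : ℝ) * (n : ℝ) := by
        rw [pow_succ, pow_succ]
      calc ε * ((n : ℝ) * (C₁ * (n : ℝ) ^ (2 * m))) * (n : ℝ)
          = C₁ * (((n : ℝ) ^ (2 * m) * (n : ℝ) * (n : ℝ)) / (n : ℝ) ^ (2 * m + 2)) := by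
            rw [hε_def]; ring
        _ = C₁ := by rw [← e1, div_self (by positivity), mul_one]
        _ ≤ C₁ := le_refl _
    -- numeric part 2
    have ht2q : t ^ (2 * q) = (n : ℝ) ^ q * (b ^ 2 / (4 * σ ^ 2)) ^ q := by
      rw [pow_mul, ht_def]
      rw [← mul_pow]
      congr 1
      rw [div_pow, mul_pow, Real.sq_sqrt (Nat.cast_nonneg n), mul_pow]
      ring
    have part2 : (1 / (4 * ε)) * ((n : ℝ) * (Mq / t ^ (2 * q))) = C₂ / n := by
      rw [hε_def, ht2q, hC₂_def, hq_def]
      have hZ : (0 : ℝ) < b ^ 2 / (4 * σ ^ 2) := by positivity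
      have e2 : (n : ℝ) ^ (2 * m + 4) = (n : ℝ) ^ (2 * m + 2) * (n : ℝ) ^ 2 := by
        rw [← pow_add]
      rw [e2]
      have hinv : ((4 * σ ^ 2) / b ^ 2) = (b ^ 2 / (4 * σ ^ 2))⁻¹ := by
        rw [inv_div]
      rw [hinv, inv_pow]
      field_simp
    -- put it together
    calc ∫ ω in {ω | ∃ l ∈ Set.Icc 1 Kstar.card, p n ω l ∉ Kstar},
          (c n (p n ω 1) ω) ^ (2 * m) ∂ℙ
        ≤ ∫ ω, g ω ∂ℙ := le_trans step1 step2
      _ = ε * (∑ i ∈ Finset.Icc 1 n, ∫ ω, (c n i ω) ^ (2 * (2 * m)) ∂ℙ)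
          + (1 / (4 * ε)) * ((n : ℝ) * (Mq / t ^ (2 * q))) := hgval
      _ ≤ C₁ / n + C₂ / n := by
          refine add_le_add ?_ (le_of_eq part2)
          refine le_trans (mul_le_mul_of_nonneg_left hsum_bound hε.le) part1
      _ = C / n := by rw [hC_def]; ring
end
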